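/- arXiv:2509.00638 — 4 statements merged into one kernel-verified Lean document; each statement's English description precedes it below -/
import Mathlib

section
/- Let x ∈ ℂ be a root of unity with x ≠ 1, and define the extended trigonometric function Φ(s;x) = φ(s;x) − φ(−s;x^{−1}) − 1/s for every s ∈ ℂ which is not an integer. Then for every integer n and every non-integer s ∈ ℂ with |s−n| < 1, the series Σ_{m=0}^∞ ((−1)^m Li_{m+1}(x) − Li_{m+1}(x^{−1}))·(s−n)^m converges and Φ(s;x) = x^{−n}·( 1/(s−n) + Σ_{m=0}^∞ ((−1)^m Li_{m+1}(x) − Li_{m+1}(x^{−1}))·(s−n)^m ). -/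
open Filter Finset

noncomputable def zf (n p : ℕ) (x : ℂ) : ℂ := ∑ k ∈ Icc 1 n, x ^ k / (k : ℂ) ^ p

noncomputable def Li (p : ℕ) (x : ℂ) : ℂ :=
  limUnder atTop (fun N : ℕ => ∑ n ∈ Icc 1 N, x ^ n / (n : ℂ) ^ p)

noncomputable def phi (s x : ℂ) : ℂ :=
  limUnder atTop (fun N : ℕ => ∑ k ∈ range N, x ^ k / ((k : ℂ) + s))

noncomputable def Phi (s x : ℂ) : ℂ := phi s x - phi (-s) x⁻¹ - 1 / s

noncomputable def ES {r : ℕ} (p : Fin r → ℕ) (q : ℕ) (x : Fin r → ℂ) (y : ℂ) : ℂ :=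
  limUnder atTop (fun N : ℕ => ∑ n ∈ Icc 1 N, (∏ i, zf n (p i) (x i)) * y ^ n / (n : ℂ) ^ q)

noncomputable def S1 (p q : ℕ) (x y : ℂ) : ℂ :=
  limUnder atTop (fun N : ℕ => ∑ n ∈ Icc 1 N, zf n p x * y ^ n / (n : ℂ) ^ q)

noncomputable def S2 (p1 p2 q : ℕ) (x1 x2 y : ℂ) : ℂ :=
  limUnder atTop (fun N : ℕ => ∑ n ∈ Icc 1 N, zf n p1 x1 * zf n p2 x2 * y ^ n / (n : ℂ) ^ q)

noncomputable def S3 (p1 p2 p3 q : ℕ) (x1 x2 x3 y : ℂ) : ℂ :=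
  limUnder atTop (fun N : ℕ =>
    ∑ n ∈ Icc 1 N, zf n p1 x1 * zf n p2 x2 * zf n p3 x3 * y ^ n / (n : ℂ) ^ q)

noncomputable def Li2 (p q : ℕ) (x y : ℂ) : ℂ :=
  limUnder atTop (fun N : ℕ =>
    ∑ n ∈ Icc 1 N, ∑ m ∈ Ico 1 n, x ^ m * y ^ n / ((m : ℂ) ^ p * (n : ℂ) ^ q))

noncomputable def Li3 (p q r : ℕ) (x y z : ℂ) : ℂ :=
  limUnder atTop (fun N : ℕ =>
    ∑ n3 ∈ Icc 1 N, ∑ n2 ∈ Ico 1 n3, ∑ n1 ∈ Ico 1 n2,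
      x ^ n1 * y ^ n2 * z ^ n3 / ((n1 : ℂ) ^ p * (n2 : ℂ) ^ q * (n3 : ℂ) ^ r))

noncomputable def az1 (k : ℕ) (e : ℂ) : ℂ :=
  limUnder atTop (fun N : ℕ => ∑ n ∈ Icc 1 N, e ^ n / (n : ℂ) ^ k)

noncomputable def az2 (k1 k2 : ℕ) (e1 e2 : ℂ) : ℂ :=
  limUnder atTop (fun N : ℕ =>
    ∑ n2 ∈ Icc 1 N, ∑ n1 ∈ Ico 1 n2, e1 ^ n1 * e2 ^ n2 / ((n1 : ℂ) ^ k1 * (n2 : ℂ) ^ k2))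

noncomputable def az3 (k1 k2 k3 : ℕ) (e1 e2 e3 : ℂ) : ℂ :=
  limUnder atTop (fun N : ℕ =>
    ∑ n3 ∈ Icc 1 N, ∑ n2 ∈ Ico 1 n3, ∑ n1 ∈ Ico 1 n2,
      e1 ^ n1 * e2 ^ n2 * e3 ^ n3 / ((n1 : ℂ) ^ k1 * (n2 : ℂ) ^ k2 * (n3 : ℂ) ^ k3))

noncomputable def az4 (k1 k2 k3 k4 : ℕ) (e1 e2 e3 e4 : ℂ) : ℂ :=
  limUnder atTop (fun N : ℕ =>
    ∑ n4 ∈ Icc 1 N, ∑ n3 ∈ Ico 1 n4, ∑ n2 ∈ Ico 1 n3, ∑ n1 ∈ Ico 1 n2,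
      e1 ^ n1 * e2 ^ n2 * e3 ^ n3 * e4 ^ n4 /
        ((n1 : ℂ) ^ k1 * (n2 : ℂ) ^ k2 * (n3 : ℂ) ^ k3 * (n4 : ℂ) ^ k4))

open Topology

lemma sumIcc (f : ℕ → ℂ) (N : ℕ) : ∑ k ∈ Icc 1 N, f k = ∑ k ∈ range N, f (k + 1) := by
  rw [← Finset.Ico_add_one_right_eq_Icc, Finset.sum_Ico_eq_sum_range]
  exact Finset.sum_congr (by norm_num) fun i _ => by rw [Nat.add_comm]

lemma sq_partial : ∀ N : ℕ, ∑ k ∈ range N, (1:ℝ)/((k:ℝ)+1)^2 ≤ 2 := by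
  have key : ∀ N : ℕ, ∑ k ∈ range (N+1), (1:ℝ)/((k:ℝ)+1)^2 ≤ 2 - 1/((N:ℝ)+1) := by
    intro N
    induction N with
    | zero => norm_num
    | succ n ih =>
      rw [Finset.sum_range_succ]
      have h1 : (0:ℝ) < (n:ℝ)+1 := by positivity
      have h2 : (0:ℝ) < (n:ℝ)+2 := by positivity
      have h3 : (1:ℝ)/((n:ℝ)+1+1)^2 ≤ 1/((n:ℝ)+1) - 1/((n:ℝ)+2) := by
        rw [div_sub_div _ _ (ne_of_gt h1) (ne_of_gt h2)]
        rw [div_le_div_iff₀ (by positivity) (by positivity)]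
        ring_nf
        nlinarith [sq_nonneg ((n:ℝ)+1)]
      push_cast
      push_cast at ih
      have h4 : ((n:ℝ)+1+1) = ((n:ℝ)+2) := by ring
      rw [h4]
      rw [h4] at h3
      linarith
  intro N
  cases N with
  | zero => simp
  | succ n =>
    have := key n
    have h1 : (0:ℝ) < (n:ℝ)+1 := by positivity
    have : (0:ℝ) ≤ 1/((n:ℝ)+1) := by positivity
    linarith [key n]

lemma basel_summable : Summable (fun k:ℕ => (1:ℝ)/((k:ℝ)+1)^2) :=
  summable_of_sum_range_le (fun n => by positivity) sq_partial

lemma basel_tsum_le : ∑' k:ℕ, (1:ℝ)/((k:ℝ)+1)^2 ≤ 2 :=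
  Summable.tsum_le_of_sum_range_le basel_summable sq_partial

lemma cnat_ne (k : ℕ) : ((k:ℂ)+1) ≠ 0 := by
  have : ((k:ℂ)+1) = ((k+1:ℕ):ℂ) := by push_cast; ring
  rw [this]
  exact_mod_cast Nat.succ_ne_zero k

lemma cnat_norm (k : ℕ) : ‖(k:ℂ)+1‖ = (k:ℝ)+1 := by
  have : ((k:ℂ)+1) = ((k+1:ℕ):ℂ) := by push_cast; ring
  rw [this, Complex.norm_natCast]
  push_cast; ring

lemma normterm {x : ℂ} (hx : ‖x‖ = 1) (p k : ℕ) :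
    ‖x^(k+1)/((k:ℂ)+1)^p‖ = 1/((k:ℝ)+1)^p := by
  rw [norm_div, norm_pow, norm_pow, hx, one_pow, cnat_norm]

lemma geom_bound {x : ℂ} (hx : ‖x‖ = 1) (hx1 : x ≠ 1) (n : ℕ) :
    ‖∑ i ∈ range n, x^(i+1)‖ ≤ 2/‖x-1‖ := by
  have h1 : ∑ i ∈ range n, x^(i+1) = x * ∑ i ∈ range n, x^i := by
    rw [Finset.mul_sum]
    exact Finset.sum_congr rfl fun i _ => by rw [pow_succ, mul_comm]
  have hne : ‖x - 1‖ > 0 := by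
    simpa using sub_ne_zero.mpr hx1
  rw [h1, norm_mul, hx, one_mul, geom_sum_eq hx1, norm_div]
  gcongr
  calc ‖x^n - 1‖ ≤ ‖x^n‖ + ‖(1:ℂ)‖ := norm_sub_le _ _
  _ = 2 := by rw [norm_pow, hx, one_pow, norm_one]; norm_num

lemma li1_tendsto {x : ℂ} (hx : ‖x‖ = 1) (hx1 : x ≠ 1) :
    Tendsto (fun N : ℕ => ∑ n ∈ Icc 1 N, x ^ n / (n : ℂ) ^ 1) atTop (𝓝 (Li 1 x)) := by
  have hanti : Antitone (fun i:ℕ => (1:ℝ)/((i:ℝ)+1)) := by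
    intro a b hab
    have : ((a:ℝ)+1) ≤ (b:ℝ)+1 := by push_cast; exact_mod_cast by omega
    apply one_div_le_one_div_of_le (by positivity) this
  have hcauchy := hanti.cauchySeq_series_mul_of_tendsto_zero_of_bounded
    tendsto_one_div_add_atTop_nhds_zero_nat (geom_bound hx hx1)
  obtain ⟨L, hL⟩ := cauchySeq_tendsto_of_complete hcauchy
  have heq : (fun N : ℕ => ∑ n ∈ Icc 1 N, x ^ n / (n : ℂ) ^ 1)
      = fun n : ℕ => ∑ i ∈ range n, ((1:ℝ)/((i:ℝ)+1)) • x^(i+1) := by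
    funext N
    rw [sumIcc (fun n => x ^ n / (n : ℂ) ^ 1) N]
    refine Finset.sum_congr rfl fun i _ => ?_
    rw [Complex.real_smul]
    push_cast
    rw [pow_one]
    rw [one_div, inv_mul_eq_div]
  have hF : Tendsto (fun N : ℕ => ∑ n ∈ Icc 1 N, x ^ n / (n : ℂ) ^ 1) atTop (𝓝 L) := by
    rw [heq]; exact hL
  have : Li 1 x = L := hF.limUnder_eq
  rw [this]; exact hF

lemma li_hasSum {x : ℂ} (hx : ‖x‖ = 1) {p : ℕ} (hp : 2 ≤ p) :
    HasSum (fun k:ℕ => x^(k+1)/((k:ℂ)+1)^p) (Li p x) := by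
  have hle : ∀ k:ℕ, (1:ℝ)/((k:ℝ)+1)^p ≤ 1/((k:ℝ)+1)^2 := by
    intro k
    apply one_div_le_one_div_of_le (by positivity)
    apply pow_le_pow_right₀ (by push_cast; linarith [Nat.cast_nonneg (α := ℝ) k]) hp
  have hsum : Summable (fun k:ℕ => x^(k+1)/((k:ℂ)+1)^p) := by
    apply Summable.of_norm_bounded basel_summable
    intro k; rw [normterm hx]; exact hle k
  have ht : Tendsto (fun N : ℕ => ∑ n ∈ Icc 1 N, x ^ n / (n : ℂ) ^ p) atTop
      (𝓝 (∑' k:ℕ, x^(k+1)/((k:ℂ)+1)^p)) := by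
    have h2 := hsum.hasSum.tendsto_sum_nat
    have heq : (fun N : ℕ => ∑ n ∈ Icc 1 N, x ^ n / (n : ℂ) ^ p)
        = fun N : ℕ => ∑ k ∈ range N, x^(k+1)/((k:ℂ)+1)^p := by
      funext N
      rw [sumIcc (fun n => x ^ n / (n : ℂ) ^ p) N]
      exact Finset.sum_congr rfl fun i _ => by push_cast; ring
    rw [heq]; exact h2
  have : Li p x = ∑' k:ℕ, x^(k+1)/((k:ℂ)+1)^p := ht.limUnder_eq
  rw [this]
  exact hsum.hasSum

lemma li_norm_le {x : ℂ} (hx : ‖x‖ = 1) {p : ℕ} (hp : 2 ≤ p) : ‖Li p x‖ ≤ 2 := by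
  have hle : ∀ k:ℕ, (1:ℝ)/((k:ℝ)+1)^p ≤ 1/((k:ℝ)+1)^2 := by
    intro k
    apply one_div_le_one_div_of_le (by positivity)
    apply pow_le_pow_right₀ (by push_cast; linarith [Nat.cast_nonneg (α := ℝ) k]) hp
  have hsn : Summable (fun k:ℕ => ‖x^(k+1)/((k:ℂ)+1)^p‖) := by
    apply Summable.of_nonneg_of_le (fun k => norm_nonneg _) (fun k => by rw [normterm hx]; exact hle k) basel_summable
  rw [← (li_hasSum hx hp).tsum_eq]
  refine le_trans (norm_tsum_le_tsum_norm hsn) (le_trans ?_ basel_tsum_le)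
  apply Summable.tsum_le_tsum _ hsn basel_summable
  intro k; rw [normterm hx]; exact hle k

lemma nonint_den {s : ℂ} (hs : ∀ m:ℤ, s ≠ m) (k : ℕ) : ((k:ℂ)+1)+s ≠ 0 := by
  intro h
  apply hs (-(k:ℤ)-1)
  push_cast
  linear_combination h

lemma nonint_zero {s : ℂ} (hs : ∀ m:ℤ, s ≠ m) : s ≠ 0 := by
  have := hs 0; simpa using this

lemma nonint_add {s : ℂ} (hs : ∀ m:ℤ, s ≠ m) (a : ℤ) : ∀ m:ℤ, s + a ≠ m := by
  intro m h
  apply hs (m - a)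
  push_cast
  linear_combination h

lemma nonint_neg {s : ℂ} (hs : ∀ m:ℤ, s ≠ m) : ∀ m:ℤ, -s ≠ m := by
  intro m h
  apply hs (-m)
  push_cast
  linear_combination -h

lemma tail_summable {x : ℂ} (hx : ‖x‖ = 1) {s : ℂ} (hden : ∀ k:ℕ, ((k:ℂ)+1)+s ≠ 0) :
    Summable (fun k:ℕ => x^(k+1)/(((k:ℂ)+1) * (((k:ℂ)+1)+s))) := by
  have hg : Summable (fun k:ℕ => (2:ℝ)*(1/((k:ℝ)+1)^2)) := basel_summable.mul_left 2
  apply Summable.of_norm_bounded_eventually_nat hg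
  filter_upwards [eventually_ge_atTop ⌈2*‖s‖⌉₊] with k hk
  have hks : 2*‖s‖ ≤ (k:ℝ) := le_trans (Nat.le_ceil _) (by exact_mod_cast hk)
  have hpos : (0:ℝ) < (k:ℝ)+1 := by positivity
  have hlow : ((k:ℝ)+1)/2 ≤ ‖((k:ℂ)+1)+s‖ := by
    have h1 : ‖((k:ℂ)+1)‖ ≤ ‖((k:ℂ)+1)+s‖ + ‖s‖ := by
      calc ‖((k:ℂ)+1)‖ = ‖(((k:ℂ)+1)+s) + (-s)‖ := by ring_nf
      _ ≤ ‖((k:ℂ)+1)+s‖ + ‖(-s)‖ := norm_add_le _ _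
      _ = ‖((k:ℂ)+1)+s‖ + ‖s‖ := by rw [norm_neg]
    rw [cnat_norm] at h1
    have : ‖s‖ ≤ (k:ℝ)/2 := by linarith
    linarith
  rw [norm_div, norm_mul, norm_pow, hx, one_pow, cnat_norm]
  have h2 : ((k:ℝ)+1) * (((k:ℝ)+1)/2) ≤ ((k:ℝ)+1) * ‖((k:ℂ)+1)+s‖ := by
    apply mul_le_mul_of_nonneg_left hlow (le_of_lt hpos)
  have h3 : (1:ℝ)/(((k:ℝ)+1) * ‖((k:ℂ)+1)+s‖) ≤ 1/(((k:ℝ)+1) * (((k:ℝ)+1)/2)) := by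
    apply one_div_le_one_div_of_le (by positivity) h2
  calc (1:ℝ)/(((k:ℝ)+1) * ‖((k:ℂ)+1)+s‖) ≤ 1/(((k:ℝ)+1) * (((k:ℝ)+1)/2)) := h3
  _ = 2*(1/((k:ℝ)+1)^2) := by field_simp

lemma tail_tendsto {x : ℂ} (hx : ‖x‖ = 1) (hx1 : x ≠ 1) {s : ℂ}
    (hden : ∀ k:ℕ, ((k:ℂ)+1)+s ≠ 0) :
    Tendsto (fun N : ℕ => ∑ k ∈ Icc 1 N, x^k/((k:ℂ)+s)) atTop
      (𝓝 (Li 1 x - s * ∑' k:ℕ, x^(k+1)/(((k:ℂ)+1)*(((k:ℂ)+1)+s)))) := by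
  have h1 := li1_tendsto hx hx1
  have h2 := (tail_summable hx hden).hasSum.tendsto_sum_nat
  have h3 := h1.sub (h2.const_mul s)
  refine h3.congr fun N => ?_
  rw [sumIcc (fun n => x^n/((n:ℂ))^1) N, sumIcc (fun k => x^k/((k:ℂ)+s)) N,
    Finset.mul_sum, ← Finset.sum_sub_distrib]
  refine Finset.sum_congr rfl fun k _ => ?_
  push_cast
  rw [pow_one]
  have hc := cnat_ne k
  have hd := hden k
  field_simp
  ring

lemma phi_tendsto {x : ℂ} (hx : ‖x‖ = 1) (hx1 : x ≠ 1) {s : ℂ} (hs0 : s ≠ 0)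
    (hden : ∀ k:ℕ, ((k:ℂ)+1)+s ≠ 0) :
    Tendsto (fun N : ℕ => ∑ k ∈ range N, x ^ k / ((k : ℂ) + s)) atTop
      (𝓝 (1/s + (Li 1 x - s * ∑' k:ℕ, x^(k+1)/(((k:ℂ)+1)*(((k:ℂ)+1)+s))))) := by
  rw [← tendsto_add_atTop_iff_nat 1]
  have heq : (fun N : ℕ => ∑ k ∈ range (N+1), x ^ k / ((k : ℂ) + s))
      = fun N : ℕ => 1/s + ∑ k ∈ Icc 1 N, x^k/((k:ℂ)+s) := by
    funext N
    rw [Finset.sum_range_succ' (fun k => x ^ k / ((k : ℂ) + s)) N,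
      sumIcc (fun k => x^k/((k:ℂ)+s)) N]
    simp only [Nat.cast_zero, pow_zero, zero_add, one_div]
    rw [add_comm]
  rw [heq]
  exact tendsto_const_nhds.add (tail_tendsto hx hx1 hden)

lemma phi_eq {x : ℂ} (hx : ‖x‖ = 1) (hx1 : x ≠ 1) {s : ℂ} (hs0 : s ≠ 0)
    (hden : ∀ k:ℕ, ((k:ℂ)+1)+s ≠ 0) :
    phi s x = 1/s + (Li 1 x - s * ∑' k:ℕ, x^(k+1)/(((k:ℂ)+1)*(((k:ℂ)+1)+s))) :=
  (phi_tendsto hx hx1 hs0 hden).limUnder_eq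

lemma phi_conv {x : ℂ} (hx : ‖x‖ = 1) (hx1 : x ≠ 1) {s : ℂ} (hs0 : s ≠ 0)
    (hden : ∀ k:ℕ, ((k:ℂ)+1)+s ≠ 0) :
    Tendsto (fun N : ℕ => ∑ k ∈ range N, x ^ k / ((k : ℂ) + s)) atTop (𝓝 (phi s x)) := by
  rw [phi_eq hx hx1 hs0 hden]
  exact phi_tendsto hx hx1 hs0 hden

lemma phi_step {x : ℂ} (hx : ‖x‖ = 1) (hx1 : x ≠ 1) {s : ℂ} (hs0 : s ≠ 0) (hs1 : s + 1 ≠ 0)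
    (hden : ∀ k:ℕ, ((k:ℂ)+1)+s ≠ 0) :
    phi s x = 1/s + x * phi (s+1) x := by
  have hden1 : ∀ k:ℕ, ((k:ℂ)+1)+(s+1) ≠ 0 := by
    intro k
    have := hden (k+1)
    push_cast at this ⊢
    intro h; apply this; linear_combination h
  have h1 := phi_conv hx hx1 hs0 hden
  have h2 := phi_conv hx hx1 hs1 hden1
  have h3 : Tendsto (fun N : ℕ => ∑ k ∈ range (N+1), x ^ k / ((k : ℂ) + s)) atTop
      (𝓝 (phi s x)) := (tendsto_add_atTop_iff_nat 1).mpr h1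
  have h4 : (fun N : ℕ => ∑ k ∈ range (N+1), x ^ k / ((k : ℂ) + s))
      = fun N : ℕ => 1/s + x * ∑ k ∈ range N, x ^ k / ((k : ℂ) + (s+1)) := by
    funext N
    rw [Finset.sum_range_succ' (fun k => x ^ k / ((k : ℂ) + s)) N, Finset.mul_sum]
    simp only [Nat.cast_zero, pow_zero, zero_add, one_div]
    rw [add_comm]
    congr 1
    refine Finset.sum_congr rfl fun k _ => ?_
    push_cast
    rw [show ((k:ℂ) + 1 + s) = ((k:ℂ) + (s+1)) by ring, pow_succ, mul_comm (x^k) x,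
      mul_div_assoc]
  rw [h4] at h3
  have h5 : Tendsto (fun N : ℕ => 1/s + x * ∑ k ∈ range N, x ^ k / ((k : ℂ) + (s+1)))
      atTop (𝓝 (1/s + x * phi (s+1) x)) := tendsto_const_nhds.add (h2.const_mul x)
  exact tendsto_nhds_unique h3 h5

lemma Phi_step {x : ℂ} (hx : ‖x‖ = 1) (hx1 : x ≠ 1) {s : ℂ} (hs : ∀ m:ℤ, s ≠ m) :
    Phi s x = x * Phi (s+1) x := by
  have hx0 : x ≠ 0 := by intro h; rw [h] at hx; simp at hx
  have hxi : ‖x⁻¹‖ = 1 := by rw [norm_inv, hx]; norm_num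
  have hxi1 : x⁻¹ ≠ 1 := fun h => hx1 (inv_eq_one.mp h)
  have hs0 : s ≠ 0 := nonint_zero hs
  have hs1 : s + 1 ≠ 0 := by
    have := nonint_add hs 1 0; push_cast at this; simpa using this
  have hsp1 : -(s+1) ≠ 0 := neg_ne_zero.mpr hs1
  have hden : ∀ k:ℕ, ((k:ℂ)+1)+s ≠ 0 := nonint_den hs
  have hdenm : ∀ k:ℕ, ((k:ℂ)+1)+(-(s+1)) ≠ 0 := by
    have h := nonint_den (nonint_neg (nonint_add hs 1))
    intro k; have := h k; push_cast at this ⊢; intro hh; apply this; linear_combination hh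
  have e1 := phi_step hx hx1 hs0 hs1 hden
  have e2 := phi_step hxi hxi1 hsp1
    (show -(s+1)+1 ≠ 0 by intro h; apply hs0; linear_combination -h) hdenm
  rw [show -(s+1)+1 = -s by ring] at e2
  rw [show (1:ℂ) / (-(s+1)) = -(1/(s+1)) by rw [div_neg]] at e2
  have hxx : x * x⁻¹ = 1 := mul_inv_cancel₀ hx0
  show phi s x - phi (-s) x⁻¹ - 1/s = x * (phi (s+1) x - phi (-(s+1)) x⁻¹ - 1/(s+1))
  rw [e1, e2]
  linear_combination (phi (-s) x⁻¹) * hxx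

lemma nonint_sub_int {s : ℂ} (hs : ∀ m:ℤ, s ≠ m) (a : ℤ) : ∀ m:ℤ, s - a ≠ m := by
  intro m h
  apply hs (m + a)
  push_cast
  linear_combination h

lemma Phi_shift {x : ℂ} (hx : ‖x‖ = 1) (hx1 : x ≠ 1) {s : ℂ} (hs : ∀ m:ℤ, s ≠ m) (n : ℤ) :
    Phi s x = x ^ (-n) * Phi (s - n) x := by
  have hx0 : x ≠ 0 := by intro h; rw [h] at hx; simp at hx
  induction n using Int.induction_on with
  | zero => simp
  | succ k ih =>
    have hstep := Phi_step hx hx1 (nonint_sub_int hs (k+1))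
    rw [show (s - ((k:ℤ)+1:ℤ)) + 1 = s - (k:ℤ) by push_cast; ring] at hstep
    rw [ih, hstep]
    rw [show (-((k:ℤ)+1)) = -(k:ℤ) + (-1) by ring, zpow_add₀ hx0]
    rw [show (x:ℂ) ^ (-1:ℤ) = x⁻¹ by simp]
    field_simp
  | pred k ih =>
    have hstep := Phi_step hx hx1 (nonint_add hs k)
    rw [show s + (k:ℤ) + 1 = s - (-(k:ℤ)-1:ℤ) by push_cast; ring] at hstep
    rw [show s - (-(k:ℤ):ℤ) = s + (k:ℤ) by push_cast; ring] at ih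
    rw [ih, hstep]
    rw [show (-(-(k:ℤ)-1)) = -(-(k:ℤ)) + 1 by ring, zpow_add₀ hx0]
    rw [zpow_one]
    ring

set_option maxHeartbeats 2000000 in
lemma core {x : ℂ} (hx : ‖x‖ = 1) (hx1 : x ≠ 1) {t : ℂ} (ht : ‖t‖ < 1)
    (hden : ∀ k : ℕ, ((k:ℂ)+1) + t ≠ 0) :
    HasSum (fun m : ℕ => (-1:ℂ)^m * Li (m+1) x * t^m)
      (Li 1 x - t * ∑' k:ℕ, x^(k+1)/(((k:ℂ)+1) * (((k:ℂ)+1)+t))) := by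
  set u : ℕ × ℕ → ℂ := fun p => (-1:ℂ)^p.1 * t^p.1 * (x^(p.2+1)/((p.2:ℂ)+1)^(p.1+2)) with hu_def
  have hbase1 : ∀ k:ℕ, (1:ℝ) ≤ (k:ℝ)+1 := fun k => by
    have := Nat.cast_nonneg (α := ℝ) k; linarith
  have hunorm : ∀ p : ℕ×ℕ, ‖u p‖ = ‖t‖^p.1 * (1/((p.2:ℝ)+1)^(p.1+2)) := by
    intro p
    rw [hu_def]
    simp only [norm_mul, norm_pow, norm_neg, norm_one, one_pow, one_mul]
    rw [normterm hx]
  have hu : Summable u := by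
    apply Summable.of_norm
    have hf : Summable (fun p : ℕ×ℕ => ‖t‖^p.1 * (1/((p.2:ℝ)+1)^2)) :=
      Summable.mul_of_nonneg (summable_geometric_of_lt_one (norm_nonneg t) ht)
        basel_summable (fun m => pow_nonneg (norm_nonneg t) m) (fun k => by positivity)
    have hle : ∀ p : ℕ×ℕ, ‖u p‖ ≤ ‖t‖^p.1 * (1/((p.2:ℝ)+1)^2) := by
      intro p
      rw [hunorm]
      apply mul_le_mul_of_nonneg_left _ (pow_nonneg (norm_nonneg t) p.1)
      apply one_div_le_one_div_of_le (by positivity)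
      apply pow_le_pow_right₀ (hbase1 p.2) (by omega)
    exact Summable.of_nonneg_of_le (fun p => norm_nonneg _) hle hf
  have hinner_k : ∀ k:ℕ, HasSum (fun m => u (m,k))
      (x^(k+1)/(((k:ℂ)+1)*(((k:ℂ)+1)+t))) := by
    intro k
    have hkne := cnat_ne k
    have hr : ‖-t/((k:ℂ)+1)‖ < 1 := by
      rw [norm_div, norm_neg, cnat_norm]
      calc ‖t‖/((k:ℝ)+1) ≤ ‖t‖/1 := by
            apply div_le_div_of_nonneg_left (norm_nonneg t) one_pos (hbase1 k)
      _ < 1 := by rwa [div_one]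
    have hgeom := hasSum_geometric_of_norm_lt_one hr
    have h2 := hgeom.mul_left (x^(k+1)/((k:ℂ)+1)^2)
    have heq : (fun m : ℕ => x^(k+1)/((k:ℂ)+1)^2 * (-t/((k:ℂ)+1))^m) = fun m => u (m,k) := by
      funext m
      rw [hu_def]
      show x^(k+1)/((k:ℂ)+1)^2 * (-t/((k:ℂ)+1))^m = (-1:ℂ)^m * t^m * (x^(k+1)/((k:ℂ)+1)^(m+2))
      rw [div_pow, neg_pow, div_mul_div_comm, pow_add]
      ring
    rw [heq] at h2
    have hval : x^(k+1)/((k:ℂ)+1)^2 * (1 - (-t/((k:ℂ)+1)))⁻¹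
        = x^(k+1)/(((k:ℂ)+1)*(((k:ℂ)+1)+t)) := by
      have h4 : (1 - (-t/((k:ℂ)+1))) = (((k:ℂ)+1)+t)/((k:ℂ)+1) := by field_simp; ring
      have hdk := hden k
      rw [h4, inv_div]
      field_simp
    rw [hval] at h2
    exact h2
  have hinner_m : ∀ m:ℕ, HasSum (fun k => u (m,k)) ((-1:ℂ)^m * t^m * Li (m+2) x) := by
    intro m
    have h5 := (li_hasSum hx (p := m+2) (by omega)).mul_left ((-1:ℂ)^m * t^m)
    exact h5
  have hT : ∑' k:ℕ, x^(k+1)/(((k:ℂ)+1) * (((k:ℂ)+1)+t))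
      = ∑' m:ℕ, (-1:ℂ)^m * t^m * Li (m+2) x := by
    calc ∑' k:ℕ, x^(k+1)/(((k:ℂ)+1) * (((k:ℂ)+1)+t)) = ∑' (k:ℕ) (m:ℕ), u (m,k) :=
          tsum_congr fun k => (hinner_k k).tsum_eq.symm
    _ = ∑' (m:ℕ) (k:ℕ), u (m,k) :=
          Summable.tsum_comm' hu (fun m => (hinner_m m).summable) (fun k => (hinner_k k).summable)
    _ = ∑' m:ℕ, (-1:ℂ)^m * t^m * Li (m+2) x := tsum_congr fun m => (hinner_m m).tsum_eq
  have houter : Summable (fun m:ℕ => (-1:ℂ)^m * t^m * Li (m+2) x) := by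
    apply Summable.of_norm_bounded (g := fun m => 2 * ‖t‖^m)
      ((summable_geometric_of_lt_one (norm_nonneg t) ht).mul_left 2)
    intro m
    simp only [norm_mul, norm_pow, norm_neg, norm_one, one_pow, one_mul]
    calc ‖t‖^m * ‖Li (m+2) x‖ ≤ ‖t‖^m * 2 := by
          apply mul_le_mul_of_nonneg_left (li_norm_le hx (by omega)) (pow_nonneg (norm_nonneg t) m)
    _ = 2 * ‖t‖^m := by ring
  have hshift : HasSum (fun m : ℕ => (-1:ℂ)^(m+1) * Li (m+1+1) x * t^(m+1))
      ((-t) * ∑' m:ℕ, (-1:ℂ)^m * t^m * Li (m+2) x) := by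
    have h6 := houter.hasSum.mul_left (-t)
    have heq : (fun m : ℕ => (-1:ℂ)^(m+1) * Li (m+1+1) x * t^(m+1))
        = fun m => -t * ((-1:ℂ)^m * t^m * Li (m+2) x) := by
      funext m; ring
    rw [heq]
    exact h6
  have h7 := (hasSum_nat_add_iff (f := fun m => (-1:ℂ)^m * Li (m+1) x * t^m) 1).mp hshift
  convert h7 using 1
  · rfl
  rw [hT]
  simp only [Finset.sum_range_one, pow_zero, one_mul, mul_one]
  ring

def IsRootOfUnity (x : ℂ) : Prop := ∃ n : ℕ, 0 < n ∧ x ^ n = 1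

theorem stmt3 (x : ℂ) (hx : IsRootOfUnity x) (hx1 : x ≠ 1) (n : ℤ) (s : ℂ)
    (hs : ∀ m : ℤ, s ≠ (m : ℂ)) (hsn : ‖s - n‖ < 1) :
    ∃ S : ℂ,
      HasSum (fun m : ℕ => ((-1 : ℂ) ^ m * Li (m + 1) x - Li (m + 1) x⁻¹) * (s - n) ^ m) S ∧
      Phi s x = x ^ (-n) * (1 / (s - n) + S) := by
  obtain ⟨d, hd0, hxd⟩ := hx
  have hxn : ‖x‖ = 1 := Complex.norm_eq_one_of_pow_eq_one hxd hd0.ne'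
  have hx0 : x ≠ 0 := by intro h; rw [h] at hxn; simp at hxn
  have hxi : ‖x⁻¹‖ = 1 := by rw [norm_inv, hxn]; norm_num
  have hxi1 : x⁻¹ ≠ 1 := fun h => hx1 (inv_eq_one.mp h)
  have hts : ∀ m : ℤ, s - (n:ℂ) ≠ m := nonint_sub_int hs n
  have htneg : ∀ m : ℤ, -(s - (n:ℂ)) ≠ m := nonint_neg hts
  have ht1 : ‖s - (n:ℂ)‖ < 1 := hsn
  have hden_t : ∀ k:ℕ, ((k:ℂ)+1)+(s - (n:ℂ)) ≠ 0 := nonint_den hts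
  have hden_nt : ∀ k:ℕ, ((k:ℂ)+1)+(-(s - (n:ℂ))) ≠ 0 := nonint_den htneg
  have ht0 : (s - (n:ℂ)) ≠ 0 := nonint_zero hts
  have hc1 := core hxn hx1 ht1 hden_t
  have hc2 := core hxi hxi1 (t := -(s - (n:ℂ))) (by rwa [norm_neg]) hden_nt
  have hc2' : HasSum (fun m : ℕ => Li (m+1) x⁻¹ * (s - (n:ℂ))^m)
      (Li 1 x⁻¹ - (-(s - (n:ℂ))) * ∑' k:ℕ,
        (x⁻¹)^(k+1)/(((k:ℂ)+1)*(((k:ℂ)+1)+(-(s - (n:ℂ)))))) := by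
    have heq : (fun m : ℕ => (-1:ℂ)^m * Li (m+1) x⁻¹ * (-(s - (n:ℂ)))^m)
        = fun m : ℕ => Li (m+1) x⁻¹ * (s - (n:ℂ))^m := by
      funext m
      rw [neg_pow (s - (n:ℂ)) m]
      calc (-1:ℂ)^m * Li (m+1) x⁻¹ * ((-1:ℂ)^m * (s - (n:ℂ))^m)
          = ((-1:ℂ)*(-1:ℂ))^m * (Li (m+1) x⁻¹ * (s - (n:ℂ))^m) := by rw [mul_pow]; ring
      _ = Li (m+1) x⁻¹ * (s - (n:ℂ))^m := by norm_num
    rw [← heq]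
    exact hc2
  have hS := hc1.sub hc2'
  refine ⟨(Li 1 x - (s - (n:ℂ)) * ∑' k:ℕ, x^(k+1)/(((k:ℂ)+1)*(((k:ℂ)+1)+(s - (n:ℂ)))))
    - (Li 1 x⁻¹ - (-(s - (n:ℂ))) * ∑' k:ℕ,
      (x⁻¹)^(k+1)/(((k:ℂ)+1)*(((k:ℂ)+1)+(-(s - (n:ℂ)))))), ?_, ?_⟩
  · have hfe : (fun m:ℕ => ((-1:ℂ)^m * Li (m+1) x - Li (m+1) x⁻¹) * (s - (n:ℂ))^m)
        = fun m:ℕ => (-1:ℂ)^m * Li (m+1) x * (s-(n:ℂ))^m - Li (m+1) x⁻¹ * (s-(n:ℂ))^m := by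
      funext m; ring
    rw [hfe]
    exact hS
  · have hshift := Phi_shift hxn hx1 hs n
    have hPhit : Phi (s - (n:ℂ)) x = 1/(s - (n:ℂ)) +
        ((Li 1 x - (s - (n:ℂ)) * ∑' k:ℕ, x^(k+1)/(((k:ℂ)+1)*(((k:ℂ)+1)+(s - (n:ℂ))))) -
         (Li 1 x⁻¹ - (-(s - (n:ℂ))) * ∑' k:ℕ,
           (x⁻¹)^(k+1)/(((k:ℂ)+1)*(((k:ℂ)+1)+(-(s - (n:ℂ))))))) := by
      show phi (s - (n:ℂ)) x - phi (-(s - (n:ℂ))) x⁻¹ - 1/(s - (n:ℂ)) = _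
      rw [phi_eq hxn hx1 ht0 hden_t, phi_eq hxi hxi1 (neg_ne_zero.mpr ht0) hden_nt]
      rw [show (1:ℂ) / (-(s - (n:ℂ))) = -(1/(s - (n:ℂ))) by rw [div_neg]]
      ring
    rw [hshift, hPhit]
end

section
/- Let p_1, p_2, q be positive integers and let x_1, x_2, x be roots of unity in ℂ with (q, x) ≠ (1,1). Then S_{p_1,p_2;q}(x_1,x_2;x) = Li_{p_1,p_2,q}(x_1,x_2,x) + Li_{p_2,p_1,q}(x_2,x_1,x) + Li_{p_1+p_2,q}(x_1x_2,x) + Li_{p_1,p_2+q}(x_1,x_2x) + Li_{p_2,p_1+q}(x_2,x_1x) + Li_{p_1+p_2+q}(x_1x_2x). -/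
open Filter Finset

section MyHelpers
open Topology
lemma my_rou_norm {y : ℂ} (hy : ∃ n : ℕ, 0 < n ∧ y ^ n = 1) : ‖y‖ = 1 := by
  obtain ⟨n, hn, h1⟩ := hy
  have h : ‖y‖ ^ n = 1 := by rw [← norm_pow, h1, norm_one]
  rcases lt_trichotomy ‖y‖ 1 with h'|h'|h'
  · have := pow_lt_one₀ (norm_nonneg y) h' hn.ne'
    rw [h] at this; linarith
  · exact h'
  · have := one_lt_pow₀ h' hn.ne'
    rw [h] at this; linarith

lemma my_sqrt_sum : ∀ n : ℕ, ∑ m ∈ Icc 1 n, 1 / Real.sqrt m ≤ 2 * Real.sqrt n := by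
  intro n
  induction n with
  | zero => simp
  | succ n ih =>
    rw [Finset.sum_Icc_succ_top (by omega)]
    have hs : Real.sqrt (n+1) > 0 := Real.sqrt_pos.2 (by positivity)
    have h1 : Real.sqrt (n+1) ^ 2 = (n:ℝ)+1 := Real.sq_sqrt (by positivity)
    have h2 : Real.sqrt n ^ 2 = (n:ℝ) := Real.sq_sqrt (by positivity)
    have h3 : Real.sqrt n ≥ 0 := Real.sqrt_nonneg _
    have key : 1 / Real.sqrt ((n:ℕ)+1 : ℕ) ≤ 2 * Real.sqrt (n+1) - 2 * Real.sqrt n := by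
      rw [div_le_iff₀ (by push_cast; exact hs)]
      push_cast
      nlinarith [sq_nonneg (Real.sqrt (n+1) - Real.sqrt n)]
    push_cast at *
    linarith

lemma my_inv_pow_le {p m : ℕ} (hp : 1 ≤ p) (hm : 1 ≤ m) : 1 / ((m:ℝ))^p ≤ 1 / Real.sqrt m := by
  apply one_div_le_one_div_of_le (Real.sqrt_pos.2 (by positivity))
  calc Real.sqrt m ≤ Real.sqrt ((m:ℝ)^2) :=
        Real.sqrt_le_sqrt (by nlinarith [show (1:ℝ) ≤ m by exact_mod_cast hm])
    _ = m := Real.sqrt_sq (by positivity)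
    _ ≤ (m:ℝ)^p := le_self_pow₀ (by exact_mod_cast hm) (by omega)

lemma my_inv_pow_le' {p m : ℕ} (hp : 1 ≤ p) (hm : 1 ≤ m) : 1 / ((m:ℝ))^p ≤ 1 / (m:ℝ) := by
  have hm1 : (1:ℝ) ≤ m := by exact_mod_cast hm
  apply one_div_le_one_div_of_le (by linarith)
  exact le_self_pow₀ hm1 (by omega)

lemma my_geom_bound {y : ℂ} (hy1 : ‖y‖ = 1) (hy : y ≠ 1) (N : ℕ) :
    ‖∑ n ∈ Icc 1 N, y ^ n‖ ≤ 2 / ‖y - 1‖ + 1 := by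
  have h0 : ∑ n ∈ range (N+1), y ^ n = (y ^ (N+1) - 1) / (y - 1) := geom_sum_eq hy _
  have h1 : ∑ n ∈ Icc 1 N, y ^ n = (y ^ (N+1) - 1) / (y - 1) - 1 := by
    rw [← h0, Finset.range_eq_Ico, ← Finset.Ico_add_one_right_eq_Icc]
    rw [← Finset.sum_Ico_consecutive (fun n => y ^ n) (by omega : 0 ≤ 1) (by omega : 1 ≤ N + 1)]
    simp
  rw [h1]
  have h2 : ‖(y ^ (N+1) - 1) / (y - 1)‖ ≤ 2 / ‖y - 1‖ := by
    rw [norm_div]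
    apply div_le_div_of_nonneg_right ?_ (by simp [sub_ne_zero.2 hy])
    · calc ‖y ^ (N+1) - 1‖ ≤ ‖y ^ (N+1)‖ + ‖(1:ℂ)‖ := norm_sub_le _ _
        _ = 2 := by rw [norm_pow, hy1, norm_one]; norm_num
  calc ‖(y ^ (N+1) - 1) / (y - 1) - 1‖ ≤ ‖(y ^ (N+1) - 1) / (y - 1)‖ + ‖(1:ℂ)‖ := norm_sub_le _ _
    _ ≤ 2 / ‖y - 1‖ + 1 := by rw [norm_one]; linarith

lemma my_sum_range_eq_Ico (f : ℕ → ℂ) (h0 : f 0 = 0) (N : ℕ) :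
    ∑ n ∈ range N, f n = ∑ n ∈ Ico 1 N, f n := by
  induction N with
  | zero => simp
  | succ N ih =>
    rcases Nat.eq_zero_or_pos N with h|h
    · subst h; simp [h0]
    · rw [Finset.sum_range_succ, ih, Finset.sum_Ico_succ_top (by omega : 1 ≤ N)]

lemma my_tendsto_Icc (f : ℕ → ℂ) (h0 : f 0 = 0) (hf : Summable f) :
    Tendsto (fun N : ℕ => ∑ n ∈ Icc 1 N, f n) atTop (nhds (∑' n, f n)) := by
  have h := hf.hasSum.tendsto_sum_nat
  have h2 : Tendsto (fun N : ℕ => ∑ n ∈ range (N+1), f n) atTop (nhds (∑' n, f n)) :=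
    h.comp (tendsto_add_atTop_nat 1)
  convert h2 using 2 with N
  rw [my_sum_range_eq_Ico f h0, Finset.Ico_add_one_right_eq_Icc]

lemma my_tendsto_Ico (f : ℕ → ℂ) (h0 : f 0 = 0) (hf : Summable f) :
    Tendsto (fun N : ℕ => ∑ n ∈ Ico 1 N, f n) atTop (nhds (∑' n, f n)) := by
  have h := hf.hasSum.tendsto_sum_nat
  convert h using 2 with N
  rw [my_sum_range_eq_Ico f h0]

lemma my_tendsto_inv_sqrt : Tendsto (fun n : ℕ => 1 / Real.sqrt n) atTop (nhds 0) := by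
  have h : Tendsto (fun n : ℕ => Real.sqrt n) atTop atTop := by
    apply tendsto_atTop_atTop.2
    intro b
    refine ⟨⌈b^2⌉₊, fun n hn => ?_⟩
    calc b ≤ |b| := le_abs_self b
      _ = Real.sqrt (b^2) := (Real.sqrt_sq_eq_abs b).symm
      _ ≤ Real.sqrt n := Real.sqrt_le_sqrt (le_trans (Nat.le_ceil _) (by exact_mod_cast hn))
  simpa [one_div, Pi.inv_def] using h.inv_tendsto_atTop

lemma my_abel (a : ℕ → ℂ) (y : ℂ) (N : ℕ) :
    ∑ n ∈ Icc 1 N, a n * y ^ n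
      = a N * (∑ n ∈ Icc 1 N, y ^ n)
        + ∑ n ∈ Ico 1 N, (a n - a (n+1)) * (∑ k ∈ Icc 1 n, y ^ k) := by
  induction N with
  | zero => simp
  | succ N ih =>
    rcases Nat.eq_zero_or_pos N with h|h
    · subst h; simp
    · rw [Finset.sum_Icc_succ_top (by omega), ih, Finset.sum_Ico_succ_top (by omega : 1 ≤ N),
        Finset.sum_Icc_succ_top (by omega : 1 ≤ N + 1)]
      ring

lemma my_pow32 (n : ℕ) : (n:ℝ) * Real.sqrt n = (n:ℝ) ^ ((3:ℝ)/2) := by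
  rcases Nat.eq_zero_or_pos n with h|h
  · subst h; push_cast; rw [Real.zero_rpow (by norm_num : (3:ℝ)/2 ≠ 0)]; simp
  · have hn : (0:ℝ) < n := by exact_mod_cast h
    rw [Real.sqrt_eq_rpow]
    nth_rewrite 1 [← Real.rpow_one (n:ℝ)]
    rw [← Real.rpow_add hn]
    norm_num

lemma my_summable_32 (C : ℝ) : Summable (fun n : ℕ => C / ((n:ℝ) * Real.sqrt n)) := by
  have := (Real.summable_one_div_nat_rpow.2 (by norm_num : (1:ℝ) < 3/2)).mul_left C
  refine this.congr fun n => ?_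
  symm
  rw [my_pow32]
  rw [div_eq_mul_one_div]
lemma my_harm (p n : ℕ) (hp : 1 ≤ p) : ∑ m ∈ Ico 1 n, 1 / ((m:ℝ))^p ≤ 2 * Real.sqrt n := by
  calc ∑ m ∈ Ico 1 n, 1 / ((m:ℝ))^p ≤ ∑ m ∈ Icc 1 n, 1 / ((m:ℝ))^p := by
        apply Finset.sum_le_sum_of_subset_of_nonneg
        · intro m hm
          simp only [Finset.mem_Ico, Finset.mem_Icc] at *
          omega
        · intro m _ _
          positivity
    _ ≤ ∑ m ∈ Icc 1 n, 1 / Real.sqrt m := by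
        apply Finset.sum_le_sum
        intro m hm
        simp only [Finset.mem_Icc] at hm
        exact my_inv_pow_le hp hm.1
    _ ≤ 2 * Real.sqrt n := my_sqrt_sum n

lemma my_term_norm (x1 x2 : ℂ) (hx1 : ‖x1‖ = 1) (hx2 : ‖x2‖ = 1) (p1 p2 n1 n2 : ℕ) :
    ‖x1 ^ n1 * x2 ^ n2 / ((n1:ℂ) ^ p1 * (n2:ℂ) ^ p2)‖ = 1 / ((n1:ℝ)^p1) * (1 / (n2:ℝ)^p2) := by
  rw [norm_div, norm_mul, norm_mul, norm_pow, norm_pow, norm_pow, norm_pow, hx1, hx2,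
    Complex.norm_natCast, Complex.norm_natCast]
  simp
  ring

-- Li2-type coefficient bounds
lemma my_c2_bound (u : ℂ) (hu : ‖u‖ = 1) (a : ℕ) (ha : 1 ≤ a) (n : ℕ) :
    ‖∑ m ∈ Ico 1 n, u ^ m / (m:ℂ) ^ a‖ ≤ 4 * Real.sqrt n := by
  calc ‖∑ m ∈ Ico 1 n, u ^ m / (m:ℂ) ^ a‖ ≤ ∑ m ∈ Ico 1 n, ‖u ^ m / (m:ℂ) ^ a‖ :=
        norm_sum_le _ _
    _ = ∑ m ∈ Ico 1 n, 1 / ((m:ℝ))^a := by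
        apply Finset.sum_congr rfl
        intro m _
        rw [norm_div, norm_pow, norm_pow, hu, one_pow, Complex.norm_natCast]
    _ ≤ 2 * Real.sqrt n := my_harm a n ha
    _ ≤ 4 * Real.sqrt n := by nlinarith [Real.sqrt_nonneg (n:ℝ)]

-- Li3-type coefficient bound
lemma my_c3_slice (x1 x2 : ℂ) (hx1 : ‖x1‖ = 1) (hx2 : ‖x2‖ = 1) (p1 p2 : ℕ)
    (hp1 : 1 ≤ p1) (hp2 : 1 ≤ p2) : ∀ n2 : ℕ, 1 ≤ n2 →
      ‖∑ n1 ∈ Ico 1 n2, x1 ^ n1 * x2 ^ n2 / ((n1:ℂ) ^ p1 * (n2:ℂ) ^ p2)‖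
        ≤ 2 * (1 / Real.sqrt n2) := by
    intro n2 hn2
    have hn2R : (1:ℝ) ≤ n2 := by exact_mod_cast hn2
    have hs : (0:ℝ) < Real.sqrt n2 := Real.sqrt_pos.2 (by linarith)
    calc ‖∑ n1 ∈ Ico 1 n2, x1 ^ n1 * x2 ^ n2 / ((n1:ℂ) ^ p1 * (n2:ℂ) ^ p2)‖
        ≤ ∑ n1 ∈ Ico 1 n2, ‖x1 ^ n1 * x2 ^ n2 / ((n1:ℂ) ^ p1 * (n2:ℂ) ^ p2)‖ := norm_sum_le _ _
      _ = (∑ n1 ∈ Ico 1 n2, 1 / ((n1:ℝ))^p1) * (1 / (n2:ℝ)^p2) := by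
          rw [Finset.sum_mul]
          exact Finset.sum_congr rfl fun n1 _ => my_term_norm x1 x2 hx1 hx2 p1 p2 n1 n2
      _ ≤ (2 * Real.sqrt n2) * (1 / (n2:ℝ)) := by
          have h1 := my_harm p1 n2 hp1
          have h2 := my_inv_pow_le' hp2 hn2
          apply mul_le_mul h1 h2 (by positivity) (by positivity)
      _ = 2 * (1 / Real.sqrt n2) := by
          have hss : Real.sqrt n2 * Real.sqrt n2 = (n2:ℝ) := Real.mul_self_sqrt (by linarith)
          field_simp
          linarith [hss]

lemma my_c3_bound (x1 x2 : ℂ) (hx1 : ‖x1‖ = 1) (hx2 : ‖x2‖ = 1) (p1 p2 : ℕ)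
    (hp1 : 1 ≤ p1) (hp2 : 1 ≤ p2) (n : ℕ) :
    ‖∑ n2 ∈ Ico 1 n, ∑ n1 ∈ Ico 1 n2, x1 ^ n1 * x2 ^ n2 / ((n1:ℂ) ^ p1 * (n2:ℂ) ^ p2)‖
      ≤ 4 * Real.sqrt n := by
  have step := my_c3_slice x1 x2 hx1 hx2 p1 p2 hp1 hp2
  calc ‖∑ n2 ∈ Ico 1 n, ∑ n1 ∈ Ico 1 n2, x1 ^ n1 * x2 ^ n2 / ((n1:ℂ) ^ p1 * (n2:ℂ) ^ p2)‖
      ≤ ∑ n2 ∈ Ico 1 n, ‖∑ n1 ∈ Ico 1 n2, x1 ^ n1 * x2 ^ n2 / ((n1:ℂ) ^ p1 * (n2:ℂ) ^ p2)‖ :=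
        norm_sum_le _ _
    _ ≤ ∑ n2 ∈ Ico 1 n, 2 * (1 / Real.sqrt n2) := by
        apply Finset.sum_le_sum
        intro n2 hn2
        simp only [Finset.mem_Ico] at hn2
        exact step n2 hn2.1
    _ = 2 * ∑ n2 ∈ Ico 1 n, 1 / Real.sqrt n2 := by rw [Finset.mul_sum]
    _ ≤ 2 * ∑ n2 ∈ Icc 1 n, 1 / Real.sqrt n2 := by
        apply mul_le_mul_of_nonneg_left ?_ (by norm_num)
        apply Finset.sum_le_sum_of_subset_of_nonneg
        · intro m hm
          simp only [Finset.mem_Ico, Finset.mem_Icc] at *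
          omega
        · intro m _ _
          positivity
    _ ≤ 2 * (2 * Real.sqrt n) := by
        apply mul_le_mul_of_nonneg_left (my_sqrt_sum n) (by norm_num)
    _ = 4 * Real.sqrt n := by ring
lemma my_key (c : ℕ → ℂ) (K : ℝ) (hc : ∀ n, 1 ≤ n → ‖c n‖ ≤ K * Real.sqrt n)
    (hd : ∀ n, 1 ≤ n → ‖c (n+1) - c n‖ ≤ K / Real.sqrt n)
    (r : ℕ) (hr : 1 ≤ r) (y : ℂ) (hy1 : ‖y‖ = 1)
    (h : r = 1 → y ≠ 1) :
    ∃ L, Tendsto (fun N : ℕ => ∑ n ∈ Icc 1 N, c n * y ^ n / (n:ℂ) ^ r) atTop (𝓝 L) := by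
  have hK : 0 ≤ K := by
    have := hc 1 le_rfl
    have h1 : Real.sqrt 1 = 1 := Real.sqrt_one
    push_cast at this
    rw [h1, mul_one] at this
    exact le_trans (norm_nonneg _) this
  have hnormterm : ∀ n : ℕ, ‖c n * y ^ n / (n:ℂ) ^ r‖ = ‖c n‖ / (n:ℝ) ^ r := by
    intro n
    rw [norm_div, norm_mul, norm_pow, norm_pow, hy1, one_pow, mul_one, Complex.norm_natCast]
  rcases Nat.lt_or_ge r 2 with hr2 | hr2
  · -- r = 1, y ≠ 1
    have hr1 : r = 1 := by omega
    subst hr1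
    have hy : y ≠ 1 := h rfl
    set B : ℝ := 2 / ‖y - 1‖ + 1 with hB
    have hB0 : 0 ≤ B := by positivity
    set a : ℕ → ℂ := fun n => c n / n with ha
    set T : ℕ → ℂ := fun n => ∑ k ∈ Icc 1 n, y ^ k with hT
    have hTb : ∀ n, ‖T n‖ ≤ B := fun n => my_geom_bound hy1 hy n
    have heq : ∀ N : ℕ, ∑ n ∈ Icc 1 N, c n * y ^ n / (n:ℂ) ^ 1
        = a N * T N + ∑ n ∈ Ico 1 N, (a n - a (n+1)) * T n := by
      intro N
      rw [← my_abel a y N]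
      apply Finset.sum_congr rfl
      intro n _
      rw [pow_one, ha]
      simp only []
      rw [mul_div_right_comm]
    have hanorm : ∀ n : ℕ, 1 ≤ n → ‖a n‖ ≤ K / Real.sqrt n := by
      intro n hn
      have hn0 : (0:ℝ) < n := by exact_mod_cast hn
      have hs : (0:ℝ) < Real.sqrt n := Real.sqrt_pos.2 hn0
      rw [ha]
      simp only []
      rw [norm_div, Complex.norm_natCast]
      rw [div_le_div_iff₀ hn0 hs]
      calc ‖c n‖ * Real.sqrt n ≤ (K * Real.sqrt n) * Real.sqrt n :=
            mul_le_mul_of_nonneg_right (hc n hn) (Real.sqrt_nonneg _)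
        _ = K * n := by rw [mul_assoc, Real.mul_self_sqrt hn0.le]
        _ = K * n := rfl
      -- goal: ‖c n‖ * √n ≤ K * n ... order matches? div_le_div_iff₀ : a/b ≤ c/d ↔ a*d ≤ c*b
    -- part 1
    have hpart1 : Tendsto (fun N => a N * T N) atTop (𝓝 0) := by
      apply squeeze_zero_norm (a := fun N : ℕ => K * B * (1 / Real.sqrt N))
      · intro n
        rcases Nat.eq_zero_or_pos n with h0 | h0
        · subst h0
          simp [ha, hT]
        · rw [norm_mul]
          have := mul_le_mul (hanorm n h0) (hTb n) (norm_nonneg _) (by positivity)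
          calc ‖a n‖ * ‖T n‖ ≤ K / Real.sqrt n * B := this
            _ = K * B * (1 / Real.sqrt n) := by ring
      · have := my_tendsto_inv_sqrt.const_mul (K * B)
        simpa using this
    -- part 2
    set g : ℕ → ℂ := fun n => (a n - a (n+1)) * T n with hg
    have hg0 : g 0 = 0 := by simp [hg, hT]
    have hgs : Summable g := by
      apply Summable.of_norm_bounded (g := fun n : ℕ => 2 * K * B / ((n:ℝ) * Real.sqrt n)) (my_summable_32 _)
      intro n
      rcases Nat.eq_zero_or_pos n with h0 | h0
      · subst h0
        simp [hg, hT]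
      · have hn0 : (0:ℝ) < n := by exact_mod_cast h0
        have hn10 : (0:ℝ) < (n:ℝ) + 1 := by linarith
        have hs : (0:ℝ) < Real.sqrt n := Real.sqrt_pos.2 hn0
        have hsplit : a n - a (n+1) = (c n - c (n+1)) / ((n:ℂ)+1) + c n / ((n:ℂ) * ((n:ℂ)+1)) := by
          rw [ha]
          simp only []
          have h1 : ((n:ℂ)) ≠ 0 := by exact_mod_cast hn0.ne'
          have h2 : ((n:ℂ)) + 1 ≠ 0 := by
            intro hc'
            have : ((n:ℝ)) + 1 = 0 := by exact_mod_cast congrArg Complex.re hc'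
            linarith
          push_cast
          field_simp
          ring
        have hnorm1 : ‖(c n - c (n+1)) / ((n:ℂ)+1)‖ ≤ (K / Real.sqrt n) / ((n:ℝ)+1) := by
          rw [norm_div]
          apply div_le_div₀ ?_ ?_ hn10 ?_
          · positivity
          · rw [← norm_neg, neg_sub]; exact hd n h0
          · apply le_of_eq
            rw [show ((n:ℂ)+1) = ((n+1 : ℕ) : ℂ) by push_cast; ring, Complex.norm_natCast]
            push_cast; ring
        have hnorm2 : ‖c n / ((n:ℂ) * ((n:ℂ)+1))‖ ≤ (K * Real.sqrt n) / ((n:ℝ) * ((n:ℝ)+1)) := by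
          rw [norm_div, norm_mul]
          apply div_le_div₀ ?_ (hc n h0) (by positivity) ?_
          · positivity
          · apply le_of_eq
            rw [Complex.norm_natCast, show ((n:ℂ)+1) = ((n+1 : ℕ) : ℂ) by push_cast; ring,
              Complex.norm_natCast]
            push_cast; ring
        have key : ‖a n - a (n+1)‖ ≤ 2 * K / ((n:ℝ) * Real.sqrt n) := by
          rw [hsplit]
          have hss : Real.sqrt n * Real.sqrt n = (n:ℝ) := Real.mul_self_sqrt hn0.le
          have hsn : Real.sqrt n ≤ (n:ℝ) + 1 := by
            nlinarith [Real.sqrt_nonneg (n:ℝ), Real.sq_sqrt hn0.le]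
          calc ‖(c n - c (n+1)) / ((n:ℂ)+1) + c n / ((n:ℂ) * ((n:ℂ)+1))‖
              ≤ ‖(c n - c (n+1)) / ((n:ℂ)+1)‖ + ‖c n / ((n:ℂ) * ((n:ℂ)+1))‖ := norm_add_le _ _
            _ ≤ (K / Real.sqrt n) / ((n:ℝ)+1) + (K * Real.sqrt n) / ((n:ℝ) * ((n:ℝ)+1)) := by
                linarith [hnorm1, hnorm2]
            _ ≤ K / ((n:ℝ) * Real.sqrt n) + K / ((n:ℝ) * Real.sqrt n) := by
                apply add_le_add
                · rw [div_div]
                  apply div_le_div_of_nonneg_left hK (by positivity)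
                  nlinarith [Real.sqrt_nonneg (n:ℝ)]
                · rw [div_le_div_iff₀ (by positivity) (by positivity)]
                  calc K * Real.sqrt n * ((n:ℝ) * Real.sqrt n) = K * (n:ℝ) * (n:ℝ) := by
                        rw [show K * Real.sqrt n * ((n:ℝ) * Real.sqrt n)
                          = K * (n:ℝ) * (Real.sqrt n * Real.sqrt n) by ring, hss]
                    _ ≤ K * ((n:ℝ) * ((n:ℝ)+1)) := by nlinarith
            _ = 2 * K / ((n:ℝ) * Real.sqrt n) := by ring
        calc ‖g n‖ = ‖a n - a (n+1)‖ * ‖T n‖ := norm_mul _ _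
          _ ≤ (2 * K / ((n:ℝ) * Real.sqrt n)) * B :=
              mul_le_mul key (hTb n) (norm_nonneg _) (by positivity)
          _ = 2 * K * B / ((n:ℝ) * Real.sqrt n) := by ring
    have hpart2 := my_tendsto_Ico g hg0 hgs
    refine ⟨0 + ∑' n, g n, ?_⟩
    have := hpart1.add hpart2
    apply Tendsto.congr' ?_ this
    filter_upwards with N
    rw [heq N]
  · -- r ≥ 2 : absolute convergence
    set f : ℕ → ℂ := fun n => c n * y ^ n / (n:ℂ) ^ r with hf
    have hf0 : f 0 = 0 := by
      simp [hf, zero_pow (by omega : r ≠ 0)]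
    have hfs : Summable f := by
      apply Summable.of_norm_bounded (g := fun n : ℕ => K / ((n:ℝ) * Real.sqrt n)) (my_summable_32 _)
      intro n
      rcases Nat.eq_zero_or_pos n with h0 | h0
      · subst h0
        rw [hf0]
        simp
      · have hn0 : (0:ℝ) < n := by exact_mod_cast h0
        have hn1 : (1:ℝ) ≤ n := by exact_mod_cast h0
        have hs : (0:ℝ) < Real.sqrt n := Real.sqrt_pos.2 hn0
        rw [hnormterm n]
        have h1 : ‖c n‖ / (n:ℝ) ^ r ≤ (K * Real.sqrt n) / (n:ℝ) ^ r :=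
          div_le_div_of_nonneg_right (hc n h0) (by positivity)
        apply le_trans h1
        rw [div_le_div_iff₀ (by positivity) (by positivity)]
        have hss : Real.sqrt n * Real.sqrt n = (n:ℝ) := Real.mul_self_sqrt hn0.le
        calc K * Real.sqrt n * ((n:ℝ) * Real.sqrt n) = K * ((n:ℝ) * (n:ℝ)) := by
              rw [show K * Real.sqrt n * ((n:ℝ) * Real.sqrt n)
                = K * ((n:ℝ) * (Real.sqrt n * Real.sqrt n)) by ring, hss]
          _ = K * (n:ℝ) ^ 2 := by ring
          _ ≤ K * (n:ℝ) ^ r := by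
              apply mul_le_mul_of_nonneg_left (pow_le_pow_right₀ hn1 hr2) hK
    exact ⟨∑' n, f n, my_tendsto_Icc f hf0 hfs⟩
lemma my_square (f g : ℕ → ℂ) (n : ℕ) :
    (∑ m ∈ Icc 1 n, f m) * (∑ m ∈ Icc 1 n, g m)
      = (∑ m2 ∈ Icc 1 n, ∑ m1 ∈ Ico 1 m2, f m1 * g m2)
        + (∑ m2 ∈ Icc 1 n, ∑ m1 ∈ Ico 1 m2, g m1 * f m2)
        + ∑ m ∈ Icc 1 n, f m * g m := by
  induction n with
  | zero => simp
  | succ n ih =>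
    rw [Finset.sum_Icc_succ_top (by omega : 1 ≤ n + 1) f,
        Finset.sum_Icc_succ_top (by omega : 1 ≤ n + 1) g,
        Finset.sum_Icc_succ_top (by omega : 1 ≤ n + 1) (fun m2 => ∑ m1 ∈ Ico 1 m2, f m1 * g m2),
        Finset.sum_Icc_succ_top (by omega : 1 ≤ n + 1) (fun m2 => ∑ m1 ∈ Ico 1 m2, g m1 * f m2),
        Finset.sum_Icc_succ_top (by omega : 1 ≤ n + 1) (fun m => f m * g m)]
    have e1 : ∑ m1 ∈ Ico 1 (n+1), f m1 * g (n+1) = (∑ m ∈ Icc 1 n, f m) * g (n+1) := by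
      rw [Finset.Ico_add_one_right_eq_Icc, Finset.sum_mul]
    have e2 : ∑ m1 ∈ Ico 1 (n+1), g m1 * f (n+1) = (∑ m ∈ Icc 1 n, g m) * f (n+1) := by
      rw [Finset.Ico_add_one_right_eq_Icc, Finset.sum_mul]
    rw [e1, e2]
    ring_nf
    ring_nf at ih
    linear_combination ih
lemma my_stuffle (p1 p2 q : ℕ) (x1 x2 x : ℂ) (n : ℕ) (hn : 1 ≤ n) :
    (∑ k ∈ Icc 1 n, x1 ^ k / (k:ℂ) ^ p1) * (∑ k ∈ Icc 1 n, x2 ^ k / (k:ℂ) ^ p2)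
        * x ^ n / (n:ℂ) ^ q
      = (∑ n2 ∈ Ico 1 n, ∑ n1 ∈ Ico 1 n2,
            x1 ^ n1 * x2 ^ n2 * x ^ n / ((n1:ℂ) ^ p1 * (n2:ℂ) ^ p2 * (n:ℂ) ^ q))
        + (∑ n2 ∈ Ico 1 n, ∑ n1 ∈ Ico 1 n2,
            x2 ^ n1 * x1 ^ n2 * x ^ n / ((n1:ℂ) ^ p2 * (n2:ℂ) ^ p1 * (n:ℂ) ^ q))
        + (∑ m ∈ Ico 1 n, (x1 * x2) ^ m * x ^ n / ((m:ℂ) ^ (p1+p2) * (n:ℂ) ^ q))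
        + (∑ m ∈ Ico 1 n, x1 ^ m * (x2 * x) ^ n / ((m:ℂ) ^ p1 * (n:ℂ) ^ (p2+q)))
        + (∑ m ∈ Ico 1 n, x2 ^ m * (x1 * x) ^ n / ((m:ℂ) ^ p2 * (n:ℂ) ^ (p1+q)))
        + (x1 * x2 * x) ^ n / (n:ℂ) ^ (p1+p2+q) := by
  have hsplit : ∀ F : ℕ → ℂ, ∑ m ∈ Icc 1 n, F m = ∑ m ∈ Ico 1 n, F m + F n := by
    intro F
    rw [← Finset.Ico_add_one_right_eq_Icc, Finset.sum_Ico_succ_top hn]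
  set f : ℕ → ℂ := fun k => x1 ^ k / (k:ℂ) ^ p1 with hf
  set g : ℕ → ℂ := fun k => x2 ^ k / (k:ℂ) ^ p2 with hg
  have hA : (∑ m2 ∈ Icc 1 n, ∑ m1 ∈ Ico 1 m2, f m1 * g m2) * x ^ n / (n:ℂ) ^ q
      = (∑ n2 ∈ Ico 1 n, ∑ n1 ∈ Ico 1 n2,
            x1 ^ n1 * x2 ^ n2 * x ^ n / ((n1:ℂ) ^ p1 * (n2:ℂ) ^ p2 * (n:ℂ) ^ q))
        + (∑ m ∈ Ico 1 n, x1 ^ m * (x2 * x) ^ n / ((m:ℂ) ^ p1 * (n:ℂ) ^ (p2+q))) := by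
    rw [hsplit (fun m2 => ∑ m1 ∈ Ico 1 m2, f m1 * g m2), add_mul, add_div]
    congr 1
    · rw [Finset.sum_mul, Finset.sum_div]
      refine Finset.sum_congr rfl fun m2 _ => ?_
      rw [Finset.sum_mul, Finset.sum_div]
      refine Finset.sum_congr rfl fun m1 _ => ?_
      simp only [hf, hg, div_eq_mul_inv, mul_inv]
      ring
    · rw [Finset.sum_mul, Finset.sum_div]
      refine Finset.sum_congr rfl fun m1 _ => ?_
      simp only [hf, hg, div_eq_mul_inv, mul_inv, mul_pow, pow_add]
      ring
  have hB : (∑ m2 ∈ Icc 1 n, ∑ m1 ∈ Ico 1 m2, g m1 * f m2) * x ^ n / (n:ℂ) ^ q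
      = (∑ n2 ∈ Ico 1 n, ∑ n1 ∈ Ico 1 n2,
            x2 ^ n1 * x1 ^ n2 * x ^ n / ((n1:ℂ) ^ p2 * (n2:ℂ) ^ p1 * (n:ℂ) ^ q))
        + (∑ m ∈ Ico 1 n, x2 ^ m * (x1 * x) ^ n / ((m:ℂ) ^ p2 * (n:ℂ) ^ (p1+q))) := by
    rw [hsplit (fun m2 => ∑ m1 ∈ Ico 1 m2, g m1 * f m2), add_mul, add_div]
    congr 1
    · rw [Finset.sum_mul, Finset.sum_div]
      refine Finset.sum_congr rfl fun m2 _ => ?_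
      rw [Finset.sum_mul, Finset.sum_div]
      refine Finset.sum_congr rfl fun m1 _ => ?_
      simp only [hf, hg, div_eq_mul_inv, mul_inv]
      ring
    · rw [Finset.sum_mul, Finset.sum_div]
      refine Finset.sum_congr rfl fun m1 _ => ?_
      simp only [hf, hg, div_eq_mul_inv, mul_inv, mul_pow, pow_add]
      ring
  have hC : (∑ m ∈ Icc 1 n, f m * g m) * x ^ n / (n:ℂ) ^ q
      = (∑ m ∈ Ico 1 n, (x1 * x2) ^ m * x ^ n / ((m:ℂ) ^ (p1+p2) * (n:ℂ) ^ q))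
        + (x1 * x2 * x) ^ n / (n:ℂ) ^ (p1+p2+q) := by
    rw [hsplit (fun m => f m * g m), add_mul, add_div]
    congr 1
    · rw [Finset.sum_mul, Finset.sum_div]
      refine Finset.sum_congr rfl fun m _ => ?_
      simp only [hf, hg, div_eq_mul_inv, mul_inv, mul_pow, pow_add]
      ring
    · simp only [hf, hg, div_eq_mul_inv, mul_inv, mul_pow, pow_add]
      ring
  rw [my_square f g n, add_mul, add_mul, add_div, add_div, hA, hB, hC]
  ring
lemma my_ex_Li (r : ℕ) (hr : 1 ≤ r) (y : ℂ) (hy1 : ‖y‖ = 1) (h : r = 1 → y ≠ 1) :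
    ∃ L, Tendsto (fun N : ℕ => ∑ n ∈ Icc 1 N, y ^ n / (n:ℂ) ^ r) atTop (𝓝 L) := by
  obtain ⟨L, hL⟩ := my_key (fun _ => 1) 1
    (fun n hn => by
      simp only [norm_one, one_mul]
      exact Real.one_le_sqrt.2 (by exact_mod_cast hn))
    (fun n hn => by
      simp only [sub_self, norm_zero]
      positivity)
    r hr y hy1 h
  refine ⟨L, hL.congr ?_⟩
  intro N
  refine Finset.sum_congr rfl fun n _ => by rw [one_mul]

lemma my_ex_Li2 (a b : ℕ) (ha : 1 ≤ a) (hb : 1 ≤ b) (u v : ℂ) (hu : ‖u‖ = 1) (hv : ‖v‖ = 1)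
    (h : b = 1 → v ≠ 1) :
    ∃ L, Tendsto (fun N : ℕ =>
      ∑ n ∈ Icc 1 N, ∑ m ∈ Ico 1 n, u ^ m * v ^ n / ((m:ℂ) ^ a * (n:ℂ) ^ b))
      atTop (𝓝 L) := by
  set c : ℕ → ℂ := fun n => ∑ m ∈ Ico 1 n, u ^ m / (m:ℂ) ^ a with hc
  obtain ⟨L, hL⟩ := my_key c 4
    (fun n _ => my_c2_bound u hu a ha n)
    (fun n hn => by
      have hslice : c (n+1) - c n = u ^ n / (n:ℂ) ^ a := by
        rw [hc]
        simp only []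
        rw [Finset.sum_Ico_succ_top (by omega : 1 ≤ n)]
        ring
      rw [hslice, norm_div, norm_pow, norm_pow, hu, one_pow, Complex.norm_natCast]
      calc 1 / (n:ℝ)^a ≤ 1 / Real.sqrt n := my_inv_pow_le ha hn
        _ ≤ 4 / Real.sqrt n := by
            have : (0:ℝ) ≤ 1 / Real.sqrt n := by positivity
            rw [div_le_div_iff_of_pos_right] <;>
              [skip; exact Real.sqrt_pos.2 (by exact_mod_cast hn)]
            norm_num)
    b hb v hv h
  refine ⟨L, hL.congr ?_⟩
  intro N
  refine Finset.sum_congr rfl fun n _ => ?_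
  rw [hc]
  simp only []
  rw [Finset.sum_mul, Finset.sum_div]
  refine Finset.sum_congr rfl fun m _ => ?_
  simp only [div_eq_mul_inv, mul_inv]
  ring

lemma my_ex_Li3 (p1 p2 q : ℕ) (hp1 : 1 ≤ p1) (hp2 : 1 ≤ p2) (hq : 1 ≤ q)
    (x1 x2 x : ℂ) (hx1 : ‖x1‖ = 1) (hx2 : ‖x2‖ = 1) (hx : ‖x‖ = 1)
    (h : q = 1 → x ≠ 1) :
    ∃ L, Tendsto (fun N : ℕ =>
      ∑ n3 ∈ Icc 1 N, ∑ n2 ∈ Ico 1 n3, ∑ n1 ∈ Ico 1 n2,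
        x1 ^ n1 * x2 ^ n2 * x ^ n3 / ((n1:ℂ) ^ p1 * (n2:ℂ) ^ p2 * (n3:ℂ) ^ q))
      atTop (𝓝 L) := by
  set c : ℕ → ℂ := fun n => ∑ n2 ∈ Ico 1 n, ∑ n1 ∈ Ico 1 n2,
      x1 ^ n1 * x2 ^ n2 / ((n1:ℂ) ^ p1 * (n2:ℂ) ^ p2) with hc
  obtain ⟨L, hL⟩ := my_key c 4
    (fun n _ => my_c3_bound x1 x2 hx1 hx2 p1 p2 hp1 hp2 n)
    (fun n hn => by
      have hslice : c (n+1) - c n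
          = ∑ n1 ∈ Ico 1 n, x1 ^ n1 * x2 ^ n / ((n1:ℂ) ^ p1 * (n:ℂ) ^ p2) := by
        rw [hc]
        simp only []
        rw [Finset.sum_Ico_succ_top (by omega : 1 ≤ n)]
        ring
      rw [hslice]
      calc ‖∑ n1 ∈ Ico 1 n, x1 ^ n1 * x2 ^ n / ((n1:ℂ) ^ p1 * (n:ℂ) ^ p2)‖
          ≤ 2 * (1 / Real.sqrt n) := my_c3_slice x1 x2 hx1 hx2 p1 p2 hp1 hp2 n hn
        _ ≤ 4 / Real.sqrt n := by
            have hs : (0:ℝ) < Real.sqrt n := Real.sqrt_pos.2 (by exact_mod_cast hn)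
            rw [mul_one_div]
            rw [div_le_div_iff_of_pos_right hs]
            norm_num)
    q hq x hx h
  refine ⟨L, hL.congr ?_⟩
  intro N
  refine Finset.sum_congr rfl fun n _ => ?_
  rw [hc]
  simp only []
  rw [Finset.sum_mul, Finset.sum_div]
  refine Finset.sum_congr rfl fun n2 _ => ?_
  rw [Finset.sum_mul, Finset.sum_div]
  refine Finset.sum_congr rfl fun n1 _ => ?_
  simp only [div_eq_mul_inv, mul_inv]
  ring

lemma my_rou_mul {x y : ℂ} (hx : ∃ n : ℕ, 0 < n ∧ x ^ n = 1) (hy : ∃ n : ℕ, 0 < n ∧ y ^ n = 1) :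
    ∃ n : ℕ, 0 < n ∧ (x * y) ^ n = 1 := by
  obtain ⟨n, hn, h1⟩ := hx
  obtain ⟨m, hm, h2⟩ := hy
  exact ⟨n * m, Nat.mul_pos hn hm, by
    rw [mul_pow, pow_mul, h1, one_pow, one_mul, mul_comm n m, pow_mul, h2, one_pow]⟩


end MyHelpers

theorem stmt5 (p1 p2 q : ℕ) (hp1 : 0 < p1) (hp2 : 0 < p2) (hq : 0 < q) (x1 x2 x : ℂ)
    (hx1 : IsRootOfUnity x1) (hx2 : IsRootOfUnity x2) (hx : IsRootOfUnity x)
    (h : ¬(q = 1 ∧ x = 1)) :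
    S2 p1 p2 q x1 x2 x
      = Li3 p1 p2 q x1 x2 x + Li3 p2 p1 q x2 x1 x + Li2 (p1 + p2) q (x1 * x2) x
        + Li2 p1 (p2 + q) x1 (x2 * x) + Li2 p2 (p1 + q) x2 (x1 * x)
        + Li (p1 + p2 + q) (x1 * x2 * x) := by
  have hx1n : ‖x1‖ = 1 := my_rou_norm hx1
  have hx2n : ‖x2‖ = 1 := my_rou_norm hx2
  have hxn : ‖x‖ = 1 := my_rou_norm hx
  have h12n : ‖x1 * x2‖ = 1 := by rw [norm_mul, hx1n, hx2n, mul_one]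
  have h2xn : ‖x2 * x‖ = 1 := by rw [norm_mul, hx2n, hxn, mul_one]
  have h1xn : ‖x1 * x‖ = 1 := by rw [norm_mul, hx1n, hxn, mul_one]
  have h12xn : ‖x1 * x2 * x‖ = 1 := by rw [norm_mul, h12n, hxn, mul_one]
  have hq1 : q = 1 → x ≠ 1 := fun hq' hx' => h ⟨hq', hx'⟩
  obtain ⟨L1, h1⟩ := my_ex_Li3 p1 p2 q hp1 hp2 hq x1 x2 x hx1n hx2n hxn hq1
  obtain ⟨L2, h2⟩ := my_ex_Li3 p2 p1 q hp2 hp1 hq x2 x1 x hx2n hx1n hxn hq1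
  obtain ⟨L3, h3⟩ := my_ex_Li2 (p1 + p2) q (by omega) hq (x1 * x2) x h12n hxn hq1
  obtain ⟨L4, h4⟩ := my_ex_Li2 p1 (p2 + q) hp1 (by omega) x1 (x2 * x) hx1n h2xn
    (fun hb => absurd hb (by omega))
  obtain ⟨L5, h5⟩ := my_ex_Li2 p2 (p1 + q) hp2 (by omega) x2 (x1 * x) hx2n h1xn
    (fun hb => absurd hb (by omega))
  obtain ⟨L6, h6⟩ := my_ex_Li (p1 + p2 + q) (by omega) (x1 * x2 * x) h12xn
    (fun hb => absurd hb (by omega))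
  have hsum : Tendsto
      (fun N : ℕ => ∑ n ∈ Icc 1 N, zf n p1 x1 * zf n p2 x2 * x ^ n / (n : ℂ) ^ q)
      atTop (nhds (L1 + L2 + L3 + L4 + L5 + L6)) := by
    have hT := ((((h1.add h2).add h3).add h4).add h5).add h6
    apply Tendsto.congr ?_ hT
    intro N
    rw [← Finset.sum_add_distrib, ← Finset.sum_add_distrib, ← Finset.sum_add_distrib,
      ← Finset.sum_add_distrib, ← Finset.sum_add_distrib]
    refine Finset.sum_congr rfl fun n hn => ?_
    simp only [Finset.mem_Icc] at hn
    rw [zf, zf]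
    exact (my_stuffle p1 p2 q x1 x2 x n hn.1).symm
  rw [S2, Li3, Li3, Li2, Li2, Li2, Li]
  rw [hsum.limUnder_eq, h1.limUnder_eq, h2.limUnder_eq, h3.limUnder_eq, h4.limUnder_eq,
    h5.limUnder_eq, h6.limUnder_eq]
end

section
/- Let q be a positive integer and let x_1, x_2 ∈ ℂ with 0 < |x_1|, |x_2| ≤ 1 and x_1, x_2 ≠ 1; assume moreover that q ≥ 2 or x_1x_2 ≠ 1. Then S_{1;q}(x_1^{−1}; x_1x_2) + S_{1;q}(x_2^{−1}; x_1x_2) = q·Li_{q+1}(x_1x_2) + Li_{q+1}(x_1) + Li_{q+1}(x_2) + (Li_1(x_1) + Li_1(x_2))·Li_q(x_1x_2) − Σ_{k_1+k_2=q−1, k_1,k_2≥0} Li_{k_1+1}(x_1)·Li_{k_2+1}(x_2). -/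
open Filter Finset

open Topology

lemma tele (f : ℕ → ℝ) (a : ℕ) : ∀ b, a ≤ b →
    ∑ n ∈ Ioc a b, (f n - f (n+1)) = f (a+1) - f (b+1) := by
  intro b
  induction b with
  | zero => intro h; interval_cases a <;> simp
  | succ b ih =>
    intro h
    rcases Nat.lt_or_ge a (b+1) with h' | h'
    · rw [Finset.sum_Ioc_succ_top (by omega), ih (by omega)]; ring
    · have : a = b + 1 := le_antisymm h h'
      subst this; simp

lemma geo_bound (u : ℂ) (hu : ‖u‖ ≤ 1) (hu1 : u ≠ 1) (k : ℕ) :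
    ‖∑ i ∈ range k, u ^ i‖ ≤ 2 / ‖1 - u‖ := by
  have h2 : (0:ℝ) < ‖1 - u‖ := by
    rw [norm_pos_iff, sub_ne_zero]; exact fun h => hu1 h.symm
  rw [geom_sum_eq hu1, norm_div, norm_sub_rev u 1]
  gcongr
  calc ‖u^k - 1‖ ≤ ‖u^k‖ + ‖(1:ℂ)‖ := norm_sub_le _ _
    _ ≤ 1 + 1 := by
        rw [norm_pow, norm_one]
        exact add_le_add (pow_le_one₀ (norm_nonneg u) hu) le_rfl
    _ = 2 := by norm_num

lemma tail_bound (p : ℕ) (hp : 1 ≤ p) (u : ℂ) (hu : ‖u‖ ≤ 1) (hor : 2 ≤ p ∨ u ≠ 1) :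
    ∃ C : ℝ, 0 ≤ C ∧ ∀ N M : ℕ, ‖∑ n ∈ Ioc N M, u ^ n / (n : ℂ) ^ p‖ ≤ C / (N + 1) := by
  by_cases hu1 : u = 1
  · -- p ≥ 2 case
    have hp2 : 2 ≤ p := hor.resolve_right (fun h => h hu1)
    subst hu1
    refine ⟨2, by norm_num, fun N M => ?_⟩
    calc ‖∑ n ∈ Ioc N M, (1:ℂ) ^ n / (n : ℂ) ^ p‖
        ≤ ∑ n ∈ Ioc N M, ‖(1:ℂ) ^ n / (n : ℂ) ^ p‖ := norm_sum_le _ _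
      _ ≤ ∑ n ∈ Ioc N M, (2 * ((1:ℝ)/(n:ℝ) - 1/(n+1))) := by
          apply Finset.sum_le_sum
          intro n hn
          have hn1 : 1 ≤ n := by
            simp only [mem_Ioc] at hn; omega
          have hnp : (0:ℝ) < (n:ℝ) := by exact_mod_cast hn1
          rw [one_pow, norm_div, norm_one, norm_pow, Complex.norm_natCast]
          have h1 : (n:ℝ)^2 ≤ (n:ℝ)^p := by
            apply pow_le_pow_right₀ (by exact_mod_cast hn1) hp2
          have h2 : (1:ℝ) / (n:ℝ)^p ≤ 1 / (n:ℝ)^2 := by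
            apply one_div_le_one_div_of_le (by positivity) h1
          refine (le_trans (by rw [one_div]) h2).trans ?_
          have h3 : 2 * ((1:ℝ)/(n:ℝ) - 1/(n+1)) = 2/((n:ℝ)*(n+1)) := by
            field_simp
            ring
          have hn1' : (1:ℝ) ≤ (n:ℝ) := by exact_mod_cast hn1
          rw [h3, div_le_div_iff₀ (by positivity) (by positivity)]
          nlinarith [sq_nonneg ((n:ℝ) - 1)]
      _ = 2 * ∑ n ∈ Ioc N M, ((1:ℝ)/(n:ℝ) - 1/(n+1)) := by rw [Finset.mul_sum]
      _ ≤ 2 / (N + 1) := by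
          rcases Nat.lt_or_ge N M with h | h
          · have htele : ∑ n ∈ Ioc N M, ((1:ℝ)/(n:ℝ) - 1/(n+1))
                = 1/((N:ℝ)+1) - 1/((M:ℝ)+1) := by
              have h5 := tele (fun n => (1:ℝ)/(n:ℝ)) N M (le_of_lt h)
              push_cast at h5
              exact h5
            rw [htele]
            push_cast
            have hM : (0:ℝ) < (M:ℝ)+1 := by positivity
            have : (0:ℝ) ≤ 1/((M:ℝ)+1) := by positivity
            rw [mul_sub]
            have hN : (0:ℝ) < (N:ℝ)+1 := by positivity
            rw [mul_one_div, mul_one_div]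
            have : (0:ℝ) ≤ 2/((M:ℝ)+1) := by positivity
            linarith
          · rw [Finset.Ioc_eq_empty (by omega), Finset.sum_empty, mul_zero]
            positivity
  · -- Abel case
    have hK : (0:ℝ) < ‖1 - u‖ := by
      rw [norm_pos_iff, sub_ne_zero]; exact fun h => hu1 h.symm
    set K : ℝ := 2 / ‖1 - u‖ with hKdef
    have hK0 : 0 ≤ K := by positivity
    have hG : ∀ k, ‖∑ i ∈ range k, u ^ i‖ ≤ K := fun k => geo_bound u hu hu1 k
    refine ⟨2 * K, by positivity, fun N M => ?_⟩
    rcases Nat.lt_or_ge N M with h | h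
    swap
    · rw [Finset.Ioc_eq_empty (by omega), Finset.sum_empty, norm_zero]
      positivity
    set f : ℕ → ℝ := fun i => ((i:ℝ)^p)⁻¹ with hf
    have hfnn : ∀ i, 0 ≤ f i := fun i => by positivity
    have hfmono : ∀ i, 1 ≤ i → f (i+1) ≤ f i := by
      intro i hi
      apply inv_anti₀ (by positivity)
      apply pow_le_pow_left₀ (by positivity) (by push_cast; linarith)
    have key : ∑ n ∈ Ioc N M, u ^ n / (n : ℂ) ^ p = ∑ n ∈ Ioc N M, f n • u ^ n := by
      apply Finset.sum_congr rfl
      intro n _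
      rw [Complex.real_smul, hf]
      push_cast
      rw [div_eq_mul_inv, mul_comm]
    rw [key, Finset.sum_Ioc_by_parts f (fun i => u ^ i) h]
    have b1 : ‖f M • ∑ i ∈ range (M+1), u ^ i‖ ≤ f M * K := by
      rw [norm_smul, Real.norm_eq_abs, abs_of_nonneg (hfnn M)]
      exact mul_le_mul_of_nonneg_left (hG _) (hfnn M)
    have b2 : ‖f (N+1) • ∑ i ∈ range (N+1), u ^ i‖ ≤ f (N+1) * K := by
      rw [norm_smul, Real.norm_eq_abs, abs_of_nonneg (hfnn _)]
      exact mul_le_mul_of_nonneg_left (hG _) (hfnn _)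
    have b3 : ‖∑ i ∈ Ioc N (M-1), (f (i+1) - f i) • ∑ j ∈ range (i+1), u ^ j‖
        ≤ (f (N+1) - f M) * K := by
      calc ‖∑ i ∈ Ioc N (M-1), (f (i+1) - f i) • ∑ j ∈ range (i+1), u ^ j‖
          ≤ ∑ i ∈ Ioc N (M-1), ‖(f (i+1) - f i) • ∑ j ∈ range (i+1), u ^ j‖ := norm_sum_le _ _
        _ ≤ ∑ i ∈ Ioc N (M-1), (f i - f (i+1)) * K := by
            apply Finset.sum_le_sum
            intro i hi
            simp only [mem_Ioc] at hi
            rw [norm_smul, Real.norm_eq_abs, abs_sub_comm, abs_of_nonneg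
              (sub_nonneg.mpr (hfmono i (by omega)))]
            exact mul_le_mul_of_nonneg_left (hG _) (sub_nonneg.mpr (hfmono i (by omega)))
        _ = (f (N+1) - f M) * K := by
            rw [← Finset.sum_mul, tele f N (M-1) (by omega)]
            have hM1 : M - 1 + 1 = M := by omega
            rw [hM1]
    calc ‖f M • ∑ i ∈ range (M+1), u ^ i - f (N+1) • ∑ i ∈ range (N+1), u ^ i -
          ∑ i ∈ Ioc N (M-1), (f (i+1) - f i) • ∑ j ∈ range (i+1), u ^ j‖
        ≤ f M * K + f (N+1) * K + (f (N+1) - f M) * K := by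
          refine (norm_sub_le _ _).trans ?_
          refine add_le_add ((norm_sub_le _ _).trans (add_le_add b1 b2)) b3
      _ = 2 * (f (N+1) * K) := by ring
      _ ≤ 2 * K / (N+1) := by
          have hf1 : f (N+1) ≤ ((N:ℝ)+1)⁻¹ := by
            rw [hf]
            simp only
            push_cast
            apply inv_anti₀ (by positivity)
            calc ((N:ℝ)+1) = ((N:ℝ)+1)^1 := (pow_one _).symm
              _ ≤ ((N:ℝ)+1)^p := by
                  apply pow_le_pow_right₀ (by linarith [Nat.cast_nonneg (α := ℝ) N]) hp
          rw [div_eq_mul_inv]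
          push_cast
          nlinarith [hfnn (N+1)]

lemma sum_Icc_eq_sum_Ioc (f : ℕ → ℂ) (N : ℕ) :
    ∑ n ∈ Icc 1 N, f n = ∑ n ∈ Ioc 0 N, f n := by
  apply Finset.sum_congr _ (fun _ _ => rfl)
  ext a; simp; omega

lemma conv_tendsto (p : ℕ) (hp : 1 ≤ p) (u : ℂ) (hu : ‖u‖ ≤ 1) (hor : 2 ≤ p ∨ u ≠ 1) :
    ∃ C : ℝ, 0 ≤ C ∧
      Tendsto (fun N : ℕ => ∑ n ∈ Icc 1 N, u ^ n / (n : ℂ) ^ p) atTop (𝓝 (Li p u)) ∧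
      ∀ N : ℕ, ‖Li p u - ∑ n ∈ Icc 1 N, u ^ n / (n : ℂ) ^ p‖ ≤ C / (N + 1) := by
  obtain ⟨C, hC0, hC⟩ := tail_bound p hp u hu hor
  set s : ℕ → ℂ := fun N => ∑ n ∈ Icc 1 N, u ^ n / (n : ℂ) ^ p with hs
  have hdiff : ∀ N M : ℕ, N ≤ M → s M - s N = ∑ n ∈ Ioc N M, u ^ n / (n:ℂ)^p := by
    intro N M h
    rw [hs]
    simp only
    rw [sum_Icc_eq_sum_Ioc, sum_Icc_eq_sum_Ioc,
      ← Finset.sum_Ioc_consecutive _ (Nat.zero_le N) h]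
    ring
  have hrate : ∀ N M : ℕ, N ≤ M → ‖s M - s N‖ ≤ C / (N+1) := by
    intro N M h
    rw [hdiff N M h]
    exact hC N M
  have hb0 : Tendsto (fun N : ℕ => C / ((N:ℝ)+1)) atTop (𝓝 0) := by
    have h1 := (tendsto_const_div_atTop_nhds_zero_nat C).comp (tendsto_add_atTop_nat 1)
    have h2 : (fun N : ℕ => C / ((N:ℝ)+1)) = (fun n : ℕ => C / (n:ℝ)) ∘ (fun a => a + 1) := by
      funext N
      simp only [Function.comp_apply]
      push_cast
      ring
    rw [h2]
    exact h1
  have hcauchy : CauchySeq s := by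
    apply cauchySeq_of_le_tendsto_0 (fun N : ℕ => C / ((N:ℝ)+1)) _ hb0
    intro n m N hn hm
    have key : ∀ a b : ℕ, N ≤ a → a ≤ b → dist (s b) (s a) ≤ C / ((N:ℝ)+1) := by
      intro a b ha hab
      rw [dist_eq_norm]
      refine (hrate a b hab).trans ?_
      gcongr

    rcases le_total n m with h | h
    · rw [dist_comm]; exact key n m hn h
    · exact key m n hm h
  obtain ⟨L, hL⟩ := cauchySeq_tendsto_of_complete hcauchy
  have hLi : Li p u = L := hL.limUnder_eq
  refine ⟨C, hC0, by rw [hLi]; exact hL, ?_⟩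
  intro N
  rw [hLi]
  have h2 : Tendsto (fun M => ‖s M - s N‖) atTop (𝓝 ‖L - s N‖) :=
    ((hL.sub_const _).norm)
  apply le_of_tendsto h2
  filter_upwards [eventually_ge_atTop N] with M hM
  exact hrate N M hM

lemma tendsto_partial_of_sq_bound (f : ℕ → ℂ) (C : ℝ)
    (h : ∀ n : ℕ, ‖f n‖ ≤ C / (n:ℝ)^2) :
    ∃ L, Tendsto (fun N : ℕ => ∑ n ∈ Icc 1 N, f n) atTop (𝓝 L) := by
  have hf0 : f 0 = 0 := by
    have h0 := h 0
    norm_num at h0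
    exact h0
  have hsum : Summable f := by
    refine Summable.of_norm_bounded ?_ h
    have h1 : Summable (fun n : ℕ => 1 / (n:ℝ)^2) :=
      (Real.summable_one_div_nat_pow (p := 2)).mpr one_lt_two
    have h2 := h1.mul_left C
    have h3 : (fun n : ℕ => C / (n:ℝ)^2) = fun n : ℕ => C * (1/(n:ℝ)^2) := by
      funext n; ring
    rw [h3]; exact h2
  obtain ⟨L, hL⟩ := hsum
  refine ⟨L, ?_⟩
  have h4 := hL.tendsto_sum_nat
  have h5 := h4.comp (tendsto_add_atTop_nat 1)
  have h6 : (fun N : ℕ => ∑ n ∈ Icc 1 N, f n)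
      = (fun n : ℕ => ∑ i ∈ range n, f i) ∘ (fun a => a + 1) := by
    funext N
    simp only [Function.comp_apply]
    have h7 : range (N+1) = insert 0 (Icc 1 N) := by ext a; simp; omega
    rw [h7, Finset.sum_insert (by simp), hf0, zero_add]
  rw [h6]; exact h5

lemma inner_shift (b : ℕ → ℂ) (m N : ℕ) :
    ∑ n ∈ Ioc m N, b (n - m) = ∑ l ∈ Icc 1 (N - m), b l := by
  apply Finset.sum_nbij' (fun n => n - m) (fun l => l + m)
  · intro x hx; simp only [mem_Ioc, mem_Icc] at *; omega
  · intro x hx; simp only [mem_Ioc, mem_Icc] at *; omega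
  · intro x hx; simp only [mem_Ioc] at hx; omega
  · intro x hx; simp only [mem_Icc] at hx; omega
  · intro x hx; rfl

lemma tri_swap (g : ℕ → ℕ → ℂ) (N : ℕ) :
    ∑ n ∈ Icc 1 N, ∑ m ∈ Ico 1 n, g m n = ∑ m ∈ Icc 1 N, ∑ n ∈ Ioc m N, g m n := by
  apply Finset.sum_comm'
  intro n m
  simp only [mem_Icc, mem_Ico, mem_Ioc]
  omega

lemma harm_le (N : ℕ) : ∑ m ∈ Icc 1 N, (1:ℝ)/m ≤ 1 + Real.log (N+1) := by
  have h1 := harmonic_le_one_add_log N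
  have h2 : ((harmonic N : ℚ) : ℝ) = ∑ m ∈ Icc 1 N, (1:ℝ)/m := by
    rw [harmonic_eq_sum_Icc]
    push_cast
    simp [one_div]
  rw [h2] at h1
  refine h1.trans ?_
  have h3 : Real.log N ≤ Real.log (N+1) := by
    rcases Nat.eq_zero_or_pos N with h | h
    · subst h; norm_num
    · apply Real.log_le_log (by exact_mod_cast h)
      push_cast; linarith
  linarith

lemma log_bound_tendsto (c : ℝ) :
    Tendsto (fun N : ℕ => c * (1 + Real.log ((N:ℝ)+1)) / ((N:ℝ)+1)) atTop (𝓝 0) := by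
  have ha : Tendsto (fun x : ℝ => Real.log x / x) atTop (𝓝 0) := by
    have := Real.tendsto_pow_log_div_mul_add_atTop 1 0 1 one_ne_zero
    simpa using this
  have hb : Tendsto (fun x : ℝ => c / x) atTop (𝓝 0) :=
    tendsto_const_nhds.div_atTop tendsto_id
  have hc : Tendsto (fun x : ℝ => c / x + c * (Real.log x / x)) atTop (𝓝 (0 + c * 0)) :=
    hb.add (ha.const_mul c)
  norm_num at hc
  have h1 : Tendsto (fun x : ℝ => c * (1 + Real.log x) / x) atTop (𝓝 0) := by
    refine hc.congr' ?_
    filter_upwards [eventually_gt_atTop (0:ℝ)] with x hx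
    field_simp
  have h2 : Tendsto (fun N : ℕ => (N:ℝ)+1) atTop atTop :=
    tendsto_atTop_add_const_right atTop 1 tendsto_natCast_atTop_atTop
  exact h1.comp h2

lemma reflect_sum (N : ℕ) :
    ∑ m ∈ Icc 1 N, (1:ℝ)/(((N - m:ℕ):ℝ)+1) = ∑ m ∈ Icc 1 N, (1:ℝ)/m := by
  apply Finset.sum_nbij' (fun m => N + 1 - m) (fun m => N + 1 - m)
  · intro x hx; simp only [mem_Icc] at *; omega
  · intro x hx; simp only [mem_Icc] at *; omega
  · intro x hx; simp only [mem_Icc] at hx; omega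
  · intro x hx; simp only [mem_Icc] at hx; omega
  · intro m hm
    simp only [mem_Icc] at hm
    have h7 : N + 1 - m = (N - m) + 1 := by omega
    rw [h7]
    push_cast
    ring

lemma triangular (a b : ℕ → ℂ) (A B : ℂ) (Cb : ℝ)
    (ha : ∀ m : ℕ, 1 ≤ m → ‖a m‖ ≤ 1/(m:ℝ))
    (hA : Tendsto (fun N : ℕ => ∑ m ∈ Icc 1 N, a m) atTop (𝓝 A))
    (hB : ∀ k : ℕ, ‖B - ∑ l ∈ Icc 1 k, b l‖ ≤ Cb / ((k:ℝ) + 1)) :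
    Tendsto (fun N : ℕ => ∑ n ∈ Icc 1 N, ∑ m ∈ Ico 1 n, a m * b (n - m)) atTop (𝓝 (A * B)) := by
  have hCb0 : 0 ≤ Cb := by
    have h0 := hB 0
    simp at h0
    linarith [norm_nonneg B]
  have hstep : ∀ N : ℕ, ∑ n ∈ Icc 1 N, ∑ m ∈ Ico 1 n, a m * b (n - m)
      = ∑ m ∈ Icc 1 N, a m * (∑ l ∈ Icc 1 (N - m), b l) := by
    intro N
    rw [tri_swap (fun m n => a m * b (n - m)) N]
    apply Finset.sum_congr rfl
    intro m _
    rw [← Finset.mul_sum, inner_shift]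
  have hE : Tendsto (fun N : ℕ =>
      ∑ m ∈ Icc 1 N, a m * ((∑ l ∈ Icc 1 (N-m), b l) - B)) atTop (𝓝 0) := by
    apply squeeze_zero_norm (a := fun N : ℕ => 2 * Cb * (1 + Real.log ((N:ℝ)+1)) / ((N:ℝ)+1))
    · intro N
      calc ‖∑ m ∈ Icc 1 N, a m * ((∑ l ∈ Icc 1 (N-m), b l) - B)‖
          ≤ ∑ m ∈ Icc 1 N, ‖a m * ((∑ l ∈ Icc 1 (N-m), b l) - B)‖ := norm_sum_le _ _
        _ ≤ ∑ m ∈ Icc 1 N, Cb * ((1/(m:ℝ) + 1/(((N-m:ℕ):ℝ)+1)) / ((N:ℝ)+1)) := by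
            apply Finset.sum_le_sum
            intro m hm
            simp only [mem_Icc] at hm
            have hm1 : (1:ℝ) ≤ (m:ℝ) := by exact_mod_cast hm.1
            have hNm : ((N-m:ℕ):ℝ) = (N:ℝ) - (m:ℝ) := by
              push_cast [Nat.cast_sub hm.2]; ring
            have hb1 : ‖a m * ((∑ l ∈ Icc 1 (N-m), b l) - B)‖
                ≤ (1/(m:ℝ)) * (Cb / (((N-m:ℕ):ℝ)+1)) := by
              rw [norm_mul]
              apply mul_le_mul (ha m hm.1) ?_ (norm_nonneg _) (by positivity)
              rw [norm_sub_rev]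
              exact hB (N - m)
            refine hb1.trans (le_of_eq ?_)
            rw [hNm]
            have hden : (0:ℝ) < (N:ℝ) - m + 1 := by linarith [hm.2, (by exact_mod_cast hm.2 : (m:ℝ) ≤ (N:ℝ))]
            field_simp
            ring
        _ = Cb / ((N:ℝ)+1) * (∑ m ∈ Icc 1 N, (1:ℝ)/m + ∑ m ∈ Icc 1 N, (1:ℝ)/(((N-m:ℕ):ℝ)+1)) := by
            rw [← Finset.sum_add_distrib, Finset.mul_sum]
            apply Finset.sum_congr rfl
            intro m _
            ring
        _ = Cb / ((N:ℝ)+1) * (2 * ∑ m ∈ Icc 1 N, (1:ℝ)/m) := by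
            rw [reflect_sum]; ring
        _ ≤ 2 * Cb * (1 + Real.log ((N:ℝ)+1)) / ((N:ℝ)+1) := by
            have hh := harm_le N
            have hpos : (0:ℝ) ≤ Cb / ((N:ℝ)+1) := by positivity
            have hHnn : (0:ℝ) ≤ ∑ m ∈ Icc 1 N, (1:ℝ)/m := by
              apply Finset.sum_nonneg; intro m _; positivity
            calc Cb / ((N:ℝ)+1) * (2 * ∑ m ∈ Icc 1 N, (1:ℝ)/m)
                ≤ Cb / ((N:ℝ)+1) * (2 * (1 + Real.log ((N:ℝ)+1))) := by
                  apply mul_le_mul_of_nonneg_left (by linarith) hpos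
              _ = 2 * Cb * (1 + Real.log ((N:ℝ)+1)) / ((N:ℝ)+1) := by ring
    · exact log_bound_tendsto (2 * Cb)
  have hfinal : Tendsto (fun N : ℕ =>
      (∑ m ∈ Icc 1 N, a m * ((∑ l ∈ Icc 1 (N-m), b l) - B)) + (∑ m ∈ Icc 1 N, a m) * B)
      atTop (𝓝 (0 + A * B)) := hE.add (hA.mul_const B)
  rw [zero_add] at hfinal
  refine hfinal.congr ?_
  intro N
  rw [hstep N, Finset.sum_mul, ← Finset.sum_add_distrib]
  apply Finset.sum_congr rfl
  intro m _
  ring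

lemma pf_id (q : ℕ) (a b : ℂ) (ha : a ≠ 0) (hb : b ≠ 0) (hab : b - a ≠ 0) :
    1/((b-a) * b^q) = 1/(a^q * (b-a)) - ∑ i ∈ range q, 1/(a^(i+1) * b^(q-i)) := by
  have hgeom := geom_sum₂_mul b a q
  have hterm : ∀ i ∈ range q, 1/(a^(i+1) * b^(q-i)) = b^i * a^(q-1-i) / (a^q * b^q) := by
    intro i hi
    simp only [mem_range] at hi
    have h1 : a^q = a^(q-1-i) * a^(i+1) := by
      rw [← pow_add]; congr 1; omega
    have h2 : b^q = b^i * b^(q-i) := by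
      rw [← pow_add]; congr 1; omega
    rw [h1, h2]
    field_simp [ha, hb]
  rw [Finset.sum_congr rfl hterm, ← Finset.sum_div]
  have hS : ∑ i ∈ range q, b^i * a^(q-1-i) = (b^q - a^q) / (b - a) :=
    (eq_div_iff hab).mpr hgeom
  rw [hS]
  have haq : a^q ≠ 0 := pow_ne_zero _ ha
  have hbq : b^q ≠ 0 := pow_ne_zero _ hb
  field_simp
  ring

lemma swapk (n : ℕ) (g : ℕ → ℕ → ℂ) :
    ∑ k ∈ Ico 1 n, g (n-k) k = ∑ m ∈ Ico 1 n, g m (n-m) := by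
  apply Finset.sum_nbij' (fun k => n - k) (fun m => n - m)
  · intro x hx; simp only [mem_Ico] at *; omega
  · intro x hx; simp only [mem_Ico] at *; omega
  · intro x hx; simp only [mem_Ico] at hx; omega
  · intro x hx; simp only [mem_Ico] at hx; omega
  · intro k hk
    simp only [mem_Ico] at hk
    rw [Nat.sub_sub_self (by omega : k ≤ n)]

lemma zf_term_id (q : ℕ) (u v : ℂ) (hu : u ≠ 0) (n : ℕ) (hn : 1 ≤ n) :
    (∑ k ∈ Icc 1 n, (u⁻¹) ^ k / (k:ℂ) ^ 1) * ((u*v) ^ n) / (n:ℂ) ^ q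
      = v ^ n / (n:ℂ)^(q+1)
        + (∑ m ∈ Ico 1 n, (u*v)^m * v^(n-m) / ((m:ℂ)^q * ((n-m:ℕ):ℂ)))
        - ∑ i ∈ range q, ∑ m ∈ Ico 1 n, u^m * v^n / ((m:ℂ)^(i+1) * (n:ℂ)^(q-i)) := by
  have hn0 : (n:ℂ) ≠ 0 := Nat.cast_ne_zero.mpr (by omega)
  have hstep1 : (∑ k ∈ Icc 1 n, (u⁻¹)^k / (k:ℂ)^1) * ((u*v)^n) / (n:ℂ)^q
      = ∑ k ∈ Icc 1 n, u^(n-k) * v^n / ((k:ℂ) * (n:ℂ)^q) := by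
    rw [Finset.sum_mul, Finset.sum_div]
    apply Finset.sum_congr rfl
    intro k hk
    simp only [mem_Icc] at hk
    have hk0 : (k:ℂ) ≠ 0 := Nat.cast_ne_zero.mpr (by omega)
    rw [pow_one, mul_pow, pow_sub₀ u hu hk.2, inv_pow]
    have huk : u^k ≠ 0 := pow_ne_zero _ hu
    field_simp
  rw [hstep1]
  have hsplit : Icc 1 n = insert n (Ico 1 n) := by ext x; simp; omega
  rw [hsplit, Finset.sum_insert (by simp)]
  have hdiag : u^(n-n) * v^n / ((n:ℂ) * (n:ℂ)^q) = v^n / (n:ℂ)^(q+1) := by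
    rw [Nat.sub_self, pow_zero, one_mul, pow_succ]
    ring
  rw [hdiag]
  have hpoint : ∀ k ∈ Ico 1 n, u^(n-k) * v^n / ((k:ℂ) * (n:ℂ)^q)
      = u^(n-k) * v^n / (((n-k:ℕ):ℂ)^q * (k:ℂ))
        - ∑ i ∈ range q, u^(n-k) * v^n / (((n-k:ℕ):ℂ)^(i+1) * (n:ℂ)^(q-i)) := by
    intro k hk
    simp only [mem_Ico] at hk
    have hk0 : (k:ℂ) ≠ 0 := Nat.cast_ne_zero.mpr (by omega)
    have ha0 : ((n-k:ℕ):ℂ) ≠ 0 := Nat.cast_ne_zero.mpr (by omega)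
    have hba : (n:ℂ) - ((n-k:ℕ):ℂ) = (k:ℂ) := by
      rw [← Nat.cast_sub (by omega : n - k ≤ n)]
      congr 1
      omega
    have hpf := pf_id q ((n-k:ℕ):ℂ) (n:ℂ) ha0 hn0 (by rw [hba]; exact hk0)
    rw [hba] at hpf
    calc u^(n-k) * v^n / ((k:ℂ) * (n:ℂ)^q)
        = u^(n-k) * v^n * (1/((k:ℂ) * (n:ℂ)^q)) := by ring
      _ = u^(n-k) * v^n * (1/(((n-k:ℕ):ℂ)^q * (k:ℂ))
            - ∑ i ∈ range q, 1/(((n-k:ℕ):ℂ)^(i+1) * (n:ℂ)^(q-i))) := by rw [← hpf]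
      _ = u^(n-k) * v^n / (((n-k:ℕ):ℂ)^q * (k:ℂ))
            - ∑ i ∈ range q, u^(n-k) * v^n / (((n-k:ℕ):ℂ)^(i+1) * (n:ℂ)^(q-i)) := by
          rw [mul_sub, Finset.mul_sum]
          congr 1
          · ring
          · apply Finset.sum_congr rfl; intro i _; ring
  rw [Finset.sum_congr rfl hpoint, Finset.sum_sub_distrib, Finset.sum_comm]
  have hfirst : ∑ k ∈ Ico 1 n, u^(n-k) * v^n / (((n-k:ℕ):ℂ)^q * (k:ℂ))
      = ∑ m ∈ Ico 1 n, (u*v)^m * v^(n-m) / ((m:ℂ)^q * ((n-m:ℕ):ℂ)) := by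
    rw [swapk n (fun a c => u^a * v^n / ((a:ℂ)^q * (c:ℂ)))]
    apply Finset.sum_congr rfl
    intro m hm
    simp only [mem_Ico] at hm
    have hv : v^n = v^m * v^(n-m) := by
      rw [← pow_add]; congr 1; omega
    rw [hv, mul_pow]
    ring
  have hsecond : ∀ i ∈ range q, ∑ k ∈ Ico 1 n, u^(n-k) * v^n / (((n-k:ℕ):ℂ)^(i+1) * (n:ℂ)^(q-i))
      = ∑ m ∈ Ico 1 n, u^m * v^n / ((m:ℂ)^(i+1) * (n:ℂ)^(q-i)) := by
    intro i _
    exact swapk n (fun a c => u^a * v^n / ((a:ℂ)^(i+1) * (n:ℂ)^(q-i)))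
  rw [hfirst, Finset.sum_congr rfl hsecond]
  ring

lemma term_norm_le (x : ℂ) (hx : ‖x‖ ≤ 1) (p : ℕ) (hp : 1 ≤ p) (n : ℕ) (hn : 1 ≤ n) :
    ‖x^n/(n:ℂ)^p‖ ≤ 1/(n:ℝ) := by
  rw [norm_div, norm_pow, norm_pow, Complex.norm_natCast]
  have h1 : ‖x‖^n ≤ 1 := pow_le_one₀ (norm_nonneg x) hx
  have h2 : (n:ℝ) ≤ (n:ℝ)^p := by
    calc (n:ℝ) = (n:ℝ)^1 := (pow_one _).symm
      _ ≤ (n:ℝ)^p := pow_le_pow_right₀ (by exact_mod_cast hn) hp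
  exact div_le_div₀ (by norm_num) h1 (by exact_mod_cast hn) h2

lemma Pi_limit (a b : ℕ) (hb : 1 ≤ b) (x1 x2 : ℂ) (LA Lb : ℂ) (Ca : ℝ)
    (hx2 : ‖x2‖ ≤ 1)
    (hLA : Tendsto (fun N : ℕ => ∑ m ∈ Icc 1 N, x1^m/(m:ℂ)^a) atTop (𝓝 LA))
    (hCa : ∀ N : ℕ, ‖LA - ∑ m ∈ Icc 1 N, x1^m/(m:ℂ)^a‖ ≤ Ca/((N:ℝ)+1))
    (hx2conv : Tendsto (fun N : ℕ => ∑ n ∈ Icc 1 N, x2^n/(n:ℂ)^b) atTop (𝓝 Lb)) :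
    ∃ L, Tendsto (fun N : ℕ =>
      ∑ n ∈ Icc 1 N, ∑ m ∈ Ico 1 n, x1^m * x2^n/((m:ℂ)^a * (n:ℂ)^b)) atTop (𝓝 L) := by
  set Ap : ℕ → ℂ := fun k => ∑ m ∈ Icc 1 k, x1^m/(m:ℂ)^a with hAp
  have hre : ∀ N : ℕ, ∑ n ∈ Icc 1 N, ∑ m ∈ Ico 1 n, x1^m * x2^n/((m:ℂ)^a * (n:ℂ)^b)
      = (∑ n ∈ Icc 1 N, (Ap (n-1) - LA) * (x2^n/(n:ℂ)^b))
        + LA * ∑ n ∈ Icc 1 N, x2^n/(n:ℂ)^b := by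
    intro N
    rw [Finset.mul_sum, ← Finset.sum_add_distrib]
    apply Finset.sum_congr rfl
    intro n _
    have hIco : Ico 1 n = Icc 1 (n-1) := by ext x; simp; omega
    rw [hIco]
    have h8 : ∑ m ∈ Icc 1 (n-1), x1^m * x2^n/((m:ℂ)^a * (n:ℂ)^b)
        = Ap (n-1) * (x2^n/(n:ℂ)^b) := by
      rw [hAp]
      simp only
      rw [Finset.sum_mul]
      apply Finset.sum_congr rfl
      intro m _
      ring
    rw [h8]
    ring
  have hbnd : ∀ n : ℕ, ‖(Ap (n-1) - LA) * (x2^n/(n:ℂ)^b)‖ ≤ Ca/(n:ℝ)^2 := by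
    intro n
    rcases Nat.eq_zero_or_pos n with rfl | hn
    · simp [zero_pow (by omega : b ≠ 0)]
    · have h1 : ‖Ap (n-1) - LA‖ ≤ Ca/(n:ℝ) := by
        rw [norm_sub_rev]
        have h2 := hCa (n-1)
        have h3 : ((n-1:ℕ):ℝ)+1 = (n:ℝ) := by
          push_cast [Nat.cast_sub (by omega : 1 ≤ n)]
          ring
        rw [h3] at h2
        exact h2
      have h2 : ‖x2^n/(n:ℂ)^b‖ ≤ 1/(n:ℝ) := term_norm_le x2 hx2 b hb n hn
      calc ‖(Ap (n-1) - LA) * (x2^n/(n:ℂ)^b)‖ = ‖Ap (n-1) - LA‖ * ‖x2^n/(n:ℂ)^b‖ := norm_mul _ _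
        _ ≤ (Ca/(n:ℝ)) * (1/(n:ℝ)) := by
            apply mul_le_mul h1 h2 (norm_nonneg _) ?_
            have h0 := hCa 0
            simp at h0
            have : (0:ℝ) ≤ Ca := by linarith [norm_nonneg LA]
            positivity
        _ = Ca/(n:ℝ)^2 := by
            rw [div_mul_div_comm, mul_one]
            congr 1
            ring
  obtain ⟨L1, hL1⟩ := tendsto_partial_of_sq_bound _ Ca hbnd
  refine ⟨L1 + LA * Lb, ?_⟩
  have hcomb := hL1.add (hx2conv.const_mul LA)
  refine hcomb.congr ?_
  intro N
  exact (hre N).symm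

lemma square_split (h : ℕ → ℕ → ℂ) (N : ℕ) :
    ∑ m ∈ Icc 1 N, ∑ n ∈ Icc 1 N, h m n
      = (∑ m ∈ Icc 1 N, ∑ n ∈ Ico 1 m, h m n) + (∑ m ∈ Icc 1 N, h m m)
        + ∑ m ∈ Icc 1 N, ∑ n ∈ Ioc m N, h m n := by
  rw [← Finset.sum_add_distrib, ← Finset.sum_add_distrib]
  apply Finset.sum_congr rfl
  intro m hm
  simp only [mem_Icc] at hm
  have hd : Disjoint (Ico 1 m) (insert m (Ioc m N)) := by
    rw [Finset.disjoint_left]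
    intro x hx hx'
    simp only [mem_Ico] at hx
    simp only [mem_insert, mem_Ioc] at hx'
    omega
  have hsp : Icc 1 N = Ico 1 m ∪ insert m (Ioc m N) := by ext x; simp; omega
  rw [hsp, Finset.sum_union hd, Finset.sum_insert (by simp)]
  ring

lemma pair_id (qq : ℕ) (x1 x2 : ℂ) (i : ℕ) (hi : i < qq) (N : ℕ) :
    (∑ n ∈ Icc 1 N, ∑ m ∈ Ico 1 n, x1^m * x2^n / ((m:ℂ)^(i+1) * (n:ℂ)^(qq-i)))
      + (∑ n ∈ Icc 1 N, ∑ m ∈ Ico 1 n, x2^m * x1^n / ((m:ℂ)^(qq-1-i+1) * (n:ℂ)^(qq-(qq-1-i))))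
      = (∑ m ∈ Icc 1 N, x1^m / (m:ℂ)^(i+1)) * (∑ n ∈ Icc 1 N, x2^n / (n:ℂ)^(qq-i))
        - ∑ n ∈ Icc 1 N, (x1*x2)^n / (n:ℂ)^(qq+1) := by
  have e1 : qq-1-i+1 = qq-i := by omega
  have e2 : qq-(qq-1-i) = i+1 := by omega
  rw [e1, e2, Finset.sum_mul_sum,
    square_split (fun m n => x1^m/(m:ℂ)^(i+1) * (x2^n/(n:ℂ)^(qq-i))) N]
  have hB : ∑ m ∈ Icc 1 N, ∑ n ∈ Ioc m N, x1^m/(m:ℂ)^(i+1) * (x2^n/(n:ℂ)^(qq-i))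
      = ∑ n ∈ Icc 1 N, ∑ m ∈ Ico 1 n, x1^m * x2^n / ((m:ℂ)^(i+1) * (n:ℂ)^(qq-i)) := by
    rw [← tri_swap (fun m n => x1^m/(m:ℂ)^(i+1) * (x2^n/(n:ℂ)^(qq-i))) N]
    apply Finset.sum_congr rfl; intro n _
    apply Finset.sum_congr rfl; intro m _
    ring
  have hA : ∑ m ∈ Icc 1 N, ∑ n ∈ Ico 1 m, x1^m/(m:ℂ)^(i+1) * (x2^n/(n:ℂ)^(qq-i))
      = ∑ n ∈ Icc 1 N, ∑ m ∈ Ico 1 n, x2^m * x1^n / ((m:ℂ)^(qq-i) * (n:ℂ)^(i+1)) := by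
    apply Finset.sum_congr rfl; intro n _
    apply Finset.sum_congr rfl; intro m _
    ring
  have hD : ∑ m ∈ Icc 1 N, x1^m/(m:ℂ)^(i+1) * (x2^m/(m:ℂ)^(qq-i))
      = ∑ n ∈ Icc 1 N, (x1*x2)^n / (n:ℂ)^(qq+1) := by
    apply Finset.sum_congr rfl; intro n _
    rw [mul_pow, div_mul_div_comm, ← pow_add]
    congr 2
    omega
  rw [hB, hA, hD]
  ring

lemma global_id (q : ℕ) (u v : ℂ) (hu : u ≠ 0) (N : ℕ) :
    ∑ n ∈ Icc 1 N, zf n 1 u⁻¹ * (u*v) ^ n / (n:ℂ) ^ q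
      = (∑ n ∈ Icc 1 N, v ^ n / (n:ℂ)^(q+1))
        + (∑ n ∈ Icc 1 N, ∑ m ∈ Ico 1 n, (u*v)^m * v^(n-m) / ((m:ℂ)^q * ((n-m:ℕ):ℂ)))
        - ∑ i ∈ range q, ∑ n ∈ Icc 1 N, ∑ m ∈ Ico 1 n,
            u^m * v^n / ((m:ℂ)^(i+1) * (n:ℂ)^(q-i)) := by
  have h1 : ∀ n ∈ Icc 1 N, zf n 1 u⁻¹ * (u*v)^n/(n:ℂ)^q
      = v ^ n / (n:ℂ)^(q+1)
        + (∑ m ∈ Ico 1 n, (u*v)^m * v^(n-m) / ((m:ℂ)^q * ((n-m:ℕ):ℂ)))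
        - ∑ i ∈ range q, ∑ m ∈ Ico 1 n, u^m * v^n / ((m:ℂ)^(i+1) * (n:ℂ)^(q-i)) := by
    intro n hn
    simp only [mem_Icc] at hn
    have := zf_term_id q u v hu n hn.1
    simp only [zf]
    exact this
  rw [Finset.sum_congr rfl h1, Finset.sum_sub_distrib, Finset.sum_add_distrib]
  congr 1
  exact Finset.sum_comm


theorem stmt8 (q : ℕ) (hq : 0 < q) (x1 x2 : ℂ)
    (h1 : 0 < ‖x1‖) (h1' : ‖x1‖ ≤ 1) (h1'' : x1 ≠ 1)
    (h2 : 0 < ‖x2‖) (h2' : ‖x2‖ ≤ 1) (h2'' : x2 ≠ 1)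
    (hconv : 2 ≤ q ∨ x1 * x2 ≠ 1) :
    S1 1 q x1⁻¹ (x1 * x2) + S1 1 q x2⁻¹ (x1 * x2)
      = (q : ℂ) * Li (q + 1) (x1 * x2) + Li (q + 1) x1 + Li (q + 1) x2
        + (Li 1 x1 + Li 1 x2) * Li q (x1 * x2)
        - ∑ k ∈ range q, Li (k + 1) x1 * Li ((q - 1 - k) + 1) x2 := by
  have hx1 : x1 ≠ 0 := by intro h; rw [h] at h1; simp at h1
  have hx2 : x2 ≠ 0 := by intro h; rw [h] at h2; simp at h2
  have n1 : ‖x1‖ ≤ 1 := by exact h1'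
  have n2 : ‖x2‖ ≤ 1 := by exact h2'
  have ny : ‖x1 * x2‖ ≤ 1 := by
    rw [norm_mul]
    calc ‖x1‖ * ‖x2‖ ≤ 1 * 1 := mul_le_mul n1 n2 (norm_nonneg _) (by norm_num)
      _ = 1 := by norm_num
  have hq1 : 1 ≤ q := hq
  obtain ⟨C1, hC10, hT1x1, hR1x1⟩ := conv_tendsto 1 le_rfl x1 n1 (Or.inr h1'')
  obtain ⟨C2, hC20, hT1x2, hR1x2⟩ := conv_tendsto 1 le_rfl x2 n2 (Or.inr h2'')
  obtain ⟨Cq, hCq0, hTqy, hRqy⟩ := conv_tendsto q hq1 (x1*x2) ny hconv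
  obtain ⟨Cy1, hCy10, hTq1y, hRy1⟩ := conv_tendsto (q+1) (by omega) (x1*x2) ny (Or.inl (by omega))
  obtain ⟨Ca1, hCa10, hTq1x1, hRa1⟩ := conv_tendsto (q+1) (by omega) x1 n1 (Or.inl (by omega))
  obtain ⟨Ca2, hCa20, hTq1x2, hRa2⟩ := conv_tendsto (q+1) (by omega) x2 n2 (Or.inl (by omega))
  simp only [pow_one] at hR1x1 hR1x2
  have hPlim : ∀ i : ℕ, ∃ L : ℂ, i < q → Tendsto (fun N : ℕ =>
      ∑ n ∈ Icc 1 N, ∑ m ∈ Ico 1 n, x1^m * x2^n/((m:ℂ)^(i+1)*(n:ℂ)^(q-i))) atTop (𝓝 L) := by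
    intro i
    by_cases hi : i < q
    · obtain ⟨Ci, hCi0, hTi, hRi⟩ := conv_tendsto (i+1) (by omega) x1 n1 (Or.inr h1'')
      obtain ⟨Cb', hCb'0, hTb', hRb'⟩ := conv_tendsto (q-i) (by omega) x2 n2 (Or.inr h2'')
      obtain ⟨L, hL⟩ := Pi_limit (i+1) (q-i) (by omega) x1 x2 (Li (i+1) x1) (Li (q-i) x2)
        Ci n2 hTi hRi hTb'
      exact ⟨L, fun _ => hL⟩
    · exact ⟨0, fun h => absurd h hi⟩
  choose P hP using hPlim
  have hPtlim : ∀ i : ℕ, ∃ L : ℂ, i < q → Tendsto (fun N : ℕ =>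
      ∑ n ∈ Icc 1 N, ∑ m ∈ Ico 1 n, x2^m * x1^n/((m:ℂ)^(i+1)*(n:ℂ)^(q-i))) atTop (𝓝 L) := by
    intro i
    by_cases hi : i < q
    · obtain ⟨Ci, hCi0, hTi, hRi⟩ := conv_tendsto (i+1) (by omega) x2 n2 (Or.inr h2'')
      obtain ⟨Cb', hCb'0, hTb', hRb'⟩ := conv_tendsto (q-i) (by omega) x1 n1 (Or.inr h1'')
      obtain ⟨L, hL⟩ := Pi_limit (i+1) (q-i) (by omega) x2 x1 (Li (i+1) x2) (Li (q-i) x1)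
        Ci n1 hTi hRi hTb'
      exact ⟨L, fun _ => hL⟩
    · exact ⟨0, fun h => absurd h hi⟩
  choose Pt hPt using hPtlim
  have hpair : ∀ i : ℕ, i < q →
      P i + Pt (q-1-i) = Li (i+1) x1 * Li (q-i) x2 - Li (q+1) (x1*x2) := by
    intro i hi
    obtain ⟨Ci, hCi0, hTi, hRi⟩ := conv_tendsto (i+1) (by omega) x1 n1 (Or.inr h1'')
    obtain ⟨Cb', hCb'0, hTb', hRb'⟩ := conv_tendsto (q-i) (by omega) x2 n2 (Or.inr h2'')
    have t1 := (hP i hi).add (hPt (q-1-i) (by omega))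
    have t2 : Tendsto (fun N : ℕ =>
        (∑ m ∈ Icc 1 N, x1^m/(m:ℂ)^(i+1)) * (∑ n ∈ Icc 1 N, x2^n/(n:ℂ)^(q-i))
          - ∑ n ∈ Icc 1 N, (x1*x2)^n/(n:ℂ)^(q+1))
        atTop (𝓝 (Li (i+1) x1 * Li (q-i) x2 - Li (q+1) (x1*x2))) :=
      (hTi.mul hTb').sub hTq1y
    have t2' := t2.congr (fun N => (pair_id q x1 x2 i hi N).symm)
    exact tendsto_nhds_unique t1 t2'
  have hT1side1 : Tendsto (fun N : ℕ => ∑ n ∈ Icc 1 N, ∑ m ∈ Ico 1 n,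
      (x1*x2)^m * x2^(n-m) / ((m:ℂ)^q * ((n-m:ℕ):ℂ))) atTop (𝓝 (Li q (x1*x2) * Li 1 x2)) := by
    have htri := triangular (fun m => (x1*x2)^m/(m:ℂ)^q) (fun l => x2^l/(l:ℂ))
      (Li q (x1*x2)) (Li 1 x2) C2
      (fun m hm => term_norm_le (x1*x2) ny q hq1 m hm) hTqy (fun k => hR1x2 k)
    refine htri.congr ?_
    intro N
    apply Finset.sum_congr rfl; intro n _
    apply Finset.sum_congr rfl; intro m _
    ring
  have hT1side2 : Tendsto (fun N : ℕ => ∑ n ∈ Icc 1 N, ∑ m ∈ Ico 1 n,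
      (x1*x2)^m * x1^(n-m) / ((m:ℂ)^q * ((n-m:ℕ):ℂ))) atTop (𝓝 (Li q (x1*x2) * Li 1 x1)) := by
    have htri := triangular (fun m => (x1*x2)^m/(m:ℂ)^q) (fun l => x1^l/(l:ℂ))
      (Li q (x1*x2)) (Li 1 x1) C1
      (fun m hm => term_norm_le (x1*x2) ny q hq1 m hm) hTqy (fun k => hR1x1 k)
    refine htri.congr ?_
    intro N
    apply Finset.sum_congr rfl; intro n _
    apply Finset.sum_congr rfl; intro m _
    ring
  have hPs : Tendsto (fun N : ℕ => ∑ i ∈ range q, ∑ n ∈ Icc 1 N, ∑ m ∈ Ico 1 n,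
      x1^m * x2^n/((m:ℂ)^(i+1)*(n:ℂ)^(q-i))) atTop (𝓝 (∑ i ∈ range q, P i)) :=
    tendsto_finset_sum _ (fun i hi => hP i (mem_range.mp hi))
  have hPts : Tendsto (fun N : ℕ => ∑ i ∈ range q, ∑ n ∈ Icc 1 N, ∑ m ∈ Ico 1 n,
      x2^m * x1^n/((m:ℂ)^(i+1)*(n:ℂ)^(q-i))) atTop (𝓝 (∑ i ∈ range q, Pt i)) :=
    tendsto_finset_sum _ (fun i hi => hPt i (mem_range.mp hi))
  have hside1 : Tendsto (fun N : ℕ => ∑ n ∈ Icc 1 N, zf n 1 x1⁻¹ * (x1*x2)^n/(n:ℂ)^q) atTop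
      (𝓝 (Li (q+1) x2 + Li q (x1*x2) * Li 1 x2 - ∑ i ∈ range q, P i)) := by
    have hcomb := (hTq1x2.add hT1side1).sub hPs
    refine hcomb.congr ?_
    intro N
    exact (global_id q x1 x2 hx1 N).symm
  have hside2 : Tendsto (fun N : ℕ => ∑ n ∈ Icc 1 N, zf n 1 x2⁻¹ * (x1*x2)^n/(n:ℂ)^q) atTop
      (𝓝 (Li (q+1) x1 + Li q (x1*x2) * Li 1 x1 - ∑ i ∈ range q, Pt i)) := by
    have hcomb := (hTq1x1.add hT1side2).sub hPts
    refine hcomb.congr ?_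
    intro N
    have hg := global_id q x2 x1 hx2 N
    rw [mul_comm x2 x1] at hg
    exact hg.symm
  have hS1a : S1 1 q x1⁻¹ (x1*x2)
      = Li (q+1) x2 + Li q (x1*x2) * Li 1 x2 - ∑ i ∈ range q, P i := by
    apply Tendsto.limUnder_eq
    exact hside1
  have hS1b : S1 1 q x2⁻¹ (x1*x2)
      = Li (q+1) x1 + Li q (x1*x2) * Li 1 x1 - ∑ i ∈ range q, Pt i := by
    apply Tendsto.limUnder_eq
    exact hside2
  rw [hS1a, hS1b]
  have hsum : ∑ i ∈ range q, P i + ∑ i ∈ range q, Pt i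
      = ∑ i ∈ range q, Li (i+1) x1 * Li (q-i) x2 - (q:ℂ) * Li (q+1) (x1*x2) := by
    have hrefl : ∑ i ∈ range q, Pt i = ∑ i ∈ range q, Pt (q-1-i) :=
      (Finset.sum_range_reflect Pt q).symm
    rw [hrefl, ← Finset.sum_add_distrib]
    have hc : ∀ i ∈ range q, P i + Pt (q-1-i)
        = Li (i+1) x1 * Li (q-i) x2 - Li (q+1) (x1*x2) :=
      fun i hi => hpair i (mem_range.mp hi)
    rw [Finset.sum_congr rfl hc, Finset.sum_sub_distrib, Finset.sum_const,
      Finset.card_range, nsmul_eq_mul]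
  have hRHSsum : ∑ k ∈ range q, Li (k+1) x1 * Li ((q-1-k)+1) x2
      = ∑ i ∈ range q, Li (i+1) x1 * Li (q-i) x2 := by
    apply Finset.sum_congr rfl
    intro k hk
    simp only [mem_range] at hk
    congr 2
    omega
  rw [hRHSsum]
  linear_combination -hsum
end

section
/- Let q be a positive integer and let x ∈ ℂ with 0 < |x| ≤ 1 and x ≠ 1; assume moreover that q ≥ 2 or x² ≠ 1. Then S_{1;q}(x^{−1}; x²) = (q/2)·Li_{q+1}(x²) + Li_{q+1}(x) + Li_1(x)·Li_q(x²) − (1/2)·Σ_{k_1+k_2=q−1, k_1,k_2≥0} Li_{k_1+1}(x)·Li_{k_2+1}(x). -/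
open Filter Finset

open Topology

lemma geom_bd (y : ℂ) (hy : ‖y‖ ≤ 1) (hy1 : y ≠ 1) (n : ℕ) :
    ‖∑ i ∈ range n, y ^ i‖ ≤ 2 / ‖1 - y‖ := by
  have h1 : (0:ℝ) < ‖(1:ℂ) - y‖ := norm_pos_iff.mpr (sub_ne_zero.mpr (Ne.symm hy1))
  rw [geom_sum_eq hy1, norm_div, norm_sub_rev (y ^ n) 1, norm_sub_rev y 1]
  have h2 : ‖(1:ℂ) - y ^ n‖ ≤ 2 := by
    calc ‖(1:ℂ) - y ^ n‖ ≤ ‖(1:ℂ)‖ + ‖y ^ n‖ := norm_sub_le _ _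
    _ ≤ 1 + 1 := by
        rw [norm_one, norm_pow]
        gcongr
        exact pow_le_one₀ (norm_nonneg _) hy
    _ = 2 := by norm_num
  gcongr

lemma abel_tail (y : ℂ) (hy : ‖y‖ ≤ 1) (hy1 : y ≠ 1) (K M : ℕ) :
    ‖∑ j ∈ Ioc K M, y ^ j / (j:ℂ)‖ ≤ 6 / ‖1 - y‖ / (K + 1) := by
  have h1 : (0:ℝ) < ‖(1:ℂ) - y‖ := norm_pos_iff.mpr (sub_ne_zero.mpr (Ne.symm hy1))
  set B : ℝ := 2 / ‖1 - y‖ with hB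
  have hB0 : 0 ≤ B := by positivity
  have hKpos : (0:ℝ) < (K:ℝ) + 1 := by positivity
  rcases le_or_gt M K with hMK | hKM
  · rw [Finset.Ioc_eq_empty (by omega), Finset.sum_empty, norm_zero]
    positivity
  have hM1 : (K:ℝ) + 1 ≤ (M:ℝ) := by exact_mod_cast Nat.succ_le_of_lt hKM
  have hM0 : (0:ℝ) < (M:ℝ) := lt_of_lt_of_le hKpos hM1
  have habel := Finset.sum_Ioc_by_parts (fun j => ((j:ℂ))⁻¹) (fun j => y ^ j) hKM
  simp only [smul_eq_mul] at habel
  have hsum : ∑ j ∈ Ioc K M, y ^ j / (j:ℂ) = ∑ j ∈ Ioc K M, ((j:ℂ))⁻¹ * y ^ j := by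
    refine Finset.sum_congr rfl fun j _ => ?_
    rw [div_eq_mul_inv, mul_comm]
  rw [hsum, habel]
  have hG : ∀ n : ℕ, ‖∑ i ∈ range n, y ^ i‖ ≤ B := fun n => geom_bd y hy hy1 n
  have step1 : ‖((M:ℂ))⁻¹ * ∑ i ∈ range (M+1), y ^ i‖ ≤ B / (K+1) := by
    rw [norm_mul, norm_inv, Complex.norm_natCast]
    calc ((M:ℝ))⁻¹ * ‖∑ i ∈ range (M+1), y ^ i‖ ≤ ((K:ℝ)+1)⁻¹ * B := by
          gcongr
          exact hG _
    _ = B / (K+1) := by rw [inv_mul_eq_div]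
  have step2 : ‖(((K+1:ℕ):ℂ))⁻¹ * ∑ i ∈ range (K+1), y ^ i‖ ≤ B / (K+1) := by
    rw [norm_mul, norm_inv, Complex.norm_natCast]
    have hc : ((K+1:ℕ):ℝ) = (K:ℝ)+1 := by push_cast; ring
    rw [hc]
    calc ((K:ℝ)+1)⁻¹ * ‖∑ i ∈ range (K+1), y ^ i‖ ≤ ((K:ℝ)+1)⁻¹ * B := by gcongr; exact hG _
    _ = B / (K+1) := by rw [inv_mul_eq_div]
  have step3 : ‖∑ i ∈ Ioc K (M-1), ((((i+1:ℕ):ℂ))⁻¹ - ((i:ℂ))⁻¹) * ∑ j ∈ range (i+1), y ^ j‖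
      ≤ B / (K+1) := by
    calc ‖∑ i ∈ Ioc K (M-1), ((((i+1:ℕ):ℂ))⁻¹ - ((i:ℂ))⁻¹) * ∑ j ∈ range (i+1), y ^ j‖
        ≤ ∑ i ∈ Ioc K (M-1), ‖((((i+1:ℕ):ℂ))⁻¹ - ((i:ℂ))⁻¹) * ∑ j ∈ range (i+1), y ^ j‖ :=
          norm_sum_le _ _
      _ ≤ ∑ i ∈ Ioc K (M-1), (((i:ℝ))⁻¹ - (((i+1:ℕ):ℝ))⁻¹) * B := by
          refine Finset.sum_le_sum fun i hi => ?_
          have hi1 : 1 ≤ i := by rw [Finset.mem_Ioc] at hi; omega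
          have hi0 : (0:ℝ) < (i:ℝ) := by exact_mod_cast hi1
          have hmono : (((i+1:ℕ):ℝ))⁻¹ ≤ ((i:ℝ))⁻¹ := by
            apply inv_anti₀ hi0
            push_cast; linarith
          rw [norm_mul]
          have hnd : ‖(((i+1:ℕ):ℂ))⁻¹ - ((i:ℂ))⁻¹‖ = ((i:ℝ))⁻¹ - (((i+1:ℕ):ℝ))⁻¹ := by
            have hcast : (((i+1:ℕ):ℂ))⁻¹ - ((i:ℂ))⁻¹
                = ((((((i+1:ℕ):ℝ))⁻¹ - ((i:ℝ))⁻¹) : ℝ) : ℂ) := by push_cast; ring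
            rw [hcast, Complex.norm_real, Real.norm_eq_abs, abs_sub_comm,
              abs_of_nonneg (by linarith)]
          rw [hnd]
          gcongr
          exact hG _
      _ = (∑ i ∈ Ioc K (M-1), (((i:ℝ))⁻¹ - (((i+1:ℕ):ℝ))⁻¹)) * B := by rw [← Finset.sum_mul]
      _ ≤ (((K:ℝ)+1))⁻¹ * B := by
          gcongr
          set F : ℕ → ℝ := fun j => (((K+1+j:ℕ):ℝ))⁻¹ with hF
          have hre : ∑ i ∈ Ioc K (M-1), (((i:ℝ))⁻¹ - (((i+1:ℕ):ℝ))⁻¹) = F 0 - F (M-1-K) := by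
            rw [← Finset.sum_range_sub' F, ← Finset.Ico_add_one_add_one_eq_Ioc, Finset.sum_Ico_eq_sum_range]
            refine Finset.sum_congr (by congr 1; omega) fun i _ => ?_
            simp only [hF]
            push_cast
            ring
          have hF0 : F 0 = ((K:ℝ)+1)⁻¹ := by simp only [hF]; push_cast; norm_num
          have hFn : (0:ℝ) ≤ F (M-1-K) := by simp only [hF]; positivity
          rw [hre, hF0]
          linarith
      _ = B / (K+1) := by rw [inv_mul_eq_div]
  have hfinal : ‖((M:ℂ))⁻¹ * ∑ i ∈ range (M+1), y ^ i - (((K+1:ℕ):ℂ))⁻¹ * ∑ i ∈ range (K+1), y ^ i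
      - ∑ i ∈ Ioc K (M-1), ((((i+1:ℕ):ℂ))⁻¹ - ((i:ℂ))⁻¹) * ∑ j ∈ range (i+1), y ^ j‖
      ≤ ‖((M:ℂ))⁻¹ * ∑ i ∈ range (M+1), y ^ i‖ + ‖(((K+1:ℕ):ℂ))⁻¹ * ∑ i ∈ range (K+1), y ^ i‖
      + ‖∑ i ∈ Ioc K (M-1), ((((i+1:ℕ):ℂ))⁻¹ - ((i:ℂ))⁻¹) * ∑ j ∈ range (i+1), y ^ j‖ := by
    calc _ ≤ ‖((M:ℂ))⁻¹ * ∑ i ∈ range (M+1), y ^ i - (((K+1:ℕ):ℂ))⁻¹ * ∑ i ∈ range (K+1), y ^ i‖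
        + ‖∑ i ∈ Ioc K (M-1), ((((i+1:ℕ):ℂ))⁻¹ - ((i:ℂ))⁻¹) * ∑ j ∈ range (i+1), y ^ j‖ :=
          norm_sub_le _ _
    _ ≤ _ := add_le_add_left (norm_sub_le _ _) _
  have hgoal : 6 / ‖1-y‖ / ((K:ℝ)+1) = B/(K+1) + B/(K+1) + B/(K+1) := by rw [hB]; ring
  rw [hgoal]
  linarith [step1, step2, step3, hfinal]

lemma sum_Icc_eq_range_of_zero {f : ℕ → ℂ} (hf : f 0 = 0) (N : ℕ) :
    ∑ n ∈ Icc 1 N, f n = ∑ n ∈ range (N+1), f n := by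
  rw [range_eq_Ico, Finset.sum_eq_sum_Ico_succ_bot (Nat.succ_pos N), hf, zero_add,
    Nat.succ_eq_add_one, zero_add, Finset.Ico_add_one_right_eq_Icc]

lemma sum_Icc_sub_Icc (f : ℕ → ℂ) {K M : ℕ} (h : K ≤ M) :
    ∑ n ∈ Icc 1 M, f n - ∑ n ∈ Icc 1 K, f n = ∑ n ∈ Ioc K M, f n := by
  have e : ∀ m : ℕ, Icc 1 m = Ioc 0 m := by
    intro m; ext a; simp only [mem_Icc, mem_Ioc]; omega
  rw [e M, e K, ← Finset.sum_Ioc_consecutive f (Nat.zero_le K) h]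
  ring

lemma tendsto_Lp (p : ℕ) (hp : 1 ≤ p) (y : ℂ) (hy : ‖y‖ ≤ 1) (hc : y ≠ 1 ∨ 2 ≤ p) :
    Tendsto (fun N : ℕ => ∑ n ∈ Icc 1 N, y ^ n / (n:ℂ) ^ p) atTop (𝓝 (Li p y)) := by
  have hex : ∃ l, Tendsto (fun N : ℕ => ∑ n ∈ Icc 1 N, y ^ n / (n:ℂ) ^ p) atTop (𝓝 l) := by
    rcases le_or_gt 2 p with h2 | h2
    · have hsml : Summable (fun n : ℕ => y ^ n / (n:ℂ) ^ p) := by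
        apply Summable.of_norm_bounded (g := fun n : ℕ => 1/(n:ℝ)^2)
          ((Real.summable_one_div_nat_pow).mpr one_lt_two)
        intro n
        rcases Nat.eq_zero_or_pos n with rfl | hn
        · simp [zero_pow (by omega : p ≠ 0)]
        · have hn1 : (1:ℝ) ≤ (n:ℝ) := by exact_mod_cast hn
          rw [norm_div, norm_pow, norm_pow, Complex.norm_natCast]
          apply div_le_div₀ (by norm_num) (pow_le_one₀ (norm_nonneg _) hy)
            (by positivity) (pow_le_pow_right₀ hn1 h2)
      refine ⟨∑' n : ℕ, y ^ n / (n:ℂ) ^ p, ?_⟩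
      have h3 := hsml.hasSum.tendsto_sum_nat.comp (tendsto_add_atTop_nat 1)
      exact h3.congr fun N => (sum_Icc_eq_range_of_zero (by simp [zero_pow (by omega : p ≠ 0)]) N).symm
    · have hp1 : p = 1 := by omega
      subst hp1
      have hy1 : y ≠ 1 := hc.resolve_right (by omega)
      apply cauchySeq_tendsto_of_complete
      apply cauchySeq_of_le_tendsto_0 (fun N : ℕ => 6/‖1-y‖/(N+1))
      · have key : ∀ a b N : ℕ, N ≤ a → a ≤ b →
            dist (∑ n ∈ Icc 1 a, y ^ n / (n:ℂ) ^ 1) (∑ n ∈ Icc 1 b, y ^ n / (n:ℂ) ^ 1)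
              ≤ 6/‖1-y‖/(N+1) := by
          intro a b N hNa hab
          rw [dist_eq_norm', sum_Icc_sub_Icc _ hab]
          have h4 : ∑ n ∈ Ioc a b, y ^ n / (n:ℂ) ^ 1 = ∑ n ∈ Ioc a b, y ^ n / (n:ℂ) := by
            simp [pow_one]
          rw [h4]
          calc ‖∑ n ∈ Ioc a b, y ^ n / (n:ℂ)‖ ≤ 6/‖1-y‖/(a+1) := abel_tail y hy hy1 a b
          _ ≤ 6/‖1-y‖/(N+1) := by
              have h1 : (0:ℝ) < ‖(1:ℂ) - y‖ := norm_pos_iff.mpr (sub_ne_zero.mpr (Ne.symm hy1))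
              have hcast : ((N:ℝ)+1) ≤ ((a:ℝ)+1) := by exact_mod_cast Nat.succ_le_succ hNa
              gcongr
        intro n m N hn hm
        rcases le_total n m with h | h
        · exact key n m N hn h
        · rw [dist_comm]
          exact key m n N hm h
      · have h5 := (tendsto_const_div_atTop_nhds_zero_nat (6/‖1-y‖)).comp (tendsto_add_atTop_nat 1)
        refine h5.congr fun N => ?_
        simp only [Function.comp_apply]
        push_cast
        ring
  obtain ⟨l, hl⟩ := hex
  have hLi : Li p y = l := hl.limUnder_eq
  rw [hLi]
  exact hl

lemma Li_tail (y : ℂ) (hy : ‖y‖ ≤ 1) (hy1 : y ≠ 1) (K : ℕ) :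
    ‖Li 1 y - ∑ n ∈ Icc 1 K, y ^ n / (n:ℂ) ^ 1‖ ≤ 6 / ‖1 - y‖ / (K + 1) := by
  have ht := ((tendsto_Lp 1 le_rfl y hy (Or.inl hy1)).sub_const
    (∑ n ∈ Icc 1 K, y ^ n / (n:ℂ) ^ 1)).norm
  refine le_of_tendsto ht (eventually_atTop.mpr ⟨K, fun M hM => ?_⟩)
  rw [sum_Icc_sub_Icc _ hM]
  have h4 : ∑ n ∈ Ioc K M, y ^ n / (n:ℂ) ^ 1 = ∑ n ∈ Ioc K M, y ^ n / (n:ℂ) := by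
    simp [pow_one]
  rw [h4]
  exact abel_tail y hy hy1 K M

lemma pf_lemma (q : ℕ) (a b : ℂ) (ha : a ≠ 0) (hb : b ≠ 0) (hab : b - a ≠ 0) :
    1/((b-a) * b^q) = 1/(a^q*(b-a)) - ∑ i ∈ range q, 1/(a^(q-i) * b^(i+1)) := by
  induction q with
  | zero => simp
  | succ q ih =>
    have hstep : ∑ i ∈ range (q+1), 1/(a^(q+1-i) * b^(i+1))
        = a⁻¹ * ∑ i ∈ range q, 1/(a^(q-i) * b^(i+1)) + 1/(a * b^(q+1)) := by
      rw [Finset.sum_range_succ, Finset.mul_sum]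
      congr 1
      · refine Finset.sum_congr rfl fun i hi => ?_
        rw [Finset.mem_range] at hi
        rw [show q+1-i = (q-i)+1 by omega, pow_succ]
        field_simp
      · rw [show q+1-q = 1 by omega, pow_one]
    rw [hstep]
    have key : ∑ i ∈ range q, 1/(a^(q-i) * b^(i+1)) = 1/(a^q*(b-a)) - 1/((b-a) * b^q) := by
      rw [ih]; ring
    rw [key]
    have hbq : b^q ≠ 0 := pow_ne_zero _ hb
    have haq : a^q ≠ 0 := pow_ne_zero _ ha
    obtain ⟨c, rfl⟩ : ∃ c, b = a + c := ⟨b - a, by ring⟩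
    have hc : c ≠ 0 := by intro hc0; apply hab; rw [hc0]; ring
    have hca : a + c - a = c := by ring
    rw [hca, pow_succ a q, pow_succ (a+c) q]
    set A := a^q with hA
    set B := (a+c)^q with hBv
    clear_value A B
    clear hA hBv ih key hstep hab
    rename' hb => hb'
    have h1 : 1/((A*a)*c) - a⁻¹ * (1/(A*c)) = 0 := by
      field_simp
      ring
    have h2 : a⁻¹ * (1/(c*B)) - 1/(a*(B*(a+c))) = 1/(c*(B*(a+c))) := by
      rw [← one_div, div_mul_div_comm, one_mul]
      rw [div_sub_div _ _ (mul_ne_zero ha (mul_ne_zero hc hbq))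
        (mul_ne_zero ha (mul_ne_zero hbq hb'))]
      rw [div_eq_div_iff (mul_ne_zero (mul_ne_zero ha (mul_ne_zero hc hbq))
        (mul_ne_zero ha (mul_ne_zero hbq hb'))) (mul_ne_zero hc (mul_ne_zero hbq hb'))]
      ring
    linear_combination - h1 - h2

lemma stepA (x : ℂ) (hx : x ≠ 0) (q N : ℕ) :
    ∑ n ∈ Icc 1 N, (∑ k ∈ Icc 1 n, x⁻¹ ^ k / (k:ℂ)^1) * (x^2)^n / (n:ℂ)^q
      = (∑ n ∈ Icc 1 N, x^n/(n:ℂ)^(q+1))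
        + ∑ n ∈ Icc 1 N, ∑ m ∈ Ico 1 n, x^m * x^n / (((n:ℂ)-(m:ℂ)) * (n:ℂ)^q) := by
  rw [← Finset.sum_add_distrib]
  refine Finset.sum_congr rfl fun n hn => ?_
  rw [Finset.mem_Icc] at hn
  have hn1 : 1 ≤ n := hn.1
  have hnne : (n:ℂ) ≠ 0 := Nat.cast_ne_zero.mpr (by omega)
  have hexp : (∑ k ∈ Icc 1 n, x⁻¹ ^ k / (k:ℂ)^1) * (x^2)^n / (n:ℂ)^q
      = ∑ k ∈ Icc 1 n, x⁻¹ ^ k * (x^2)^n / ((k:ℂ) * (n:ℂ)^q) := by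
    rw [Finset.sum_mul, Finset.sum_div]
    refine Finset.sum_congr rfl fun k _ => ?_
    rw [pow_one]
    ring
  rw [hexp, ← Finset.Ico_add_one_right_eq_Icc, Finset.sum_Ico_succ_top hn1]
  have hdiag : x⁻¹ ^ n * (x^2)^n / ((n:ℂ) * (n:ℂ)^q) = x^n/(n:ℂ)^(q+1) := by
    have h1 : x⁻¹ ^ n * (x^2)^n = x^n := by
      rw [← mul_pow, sq, ← mul_assoc, inv_mul_cancel₀ hx, one_mul]
    rw [h1, pow_succ]
    ring
  rw [hdiag]
  have hre : ∑ k ∈ Ico 1 n, x⁻¹^k * (x^2)^n/((k:ℂ)*(n:ℂ)^q)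
      = ∑ m ∈ Ico 1 n, x^m * x^n/(((n:ℂ)-(m:ℂ))*(n:ℂ)^q) := by
    refine Finset.sum_nbij' (fun k => n - k) (fun m => n - m) ?_ ?_ ?_ ?_ ?_
    · intro a ha; simp only [mem_Ico] at *; omega
    · intro a ha; simp only [mem_Ico] at *; omega
    · intro a ha; simp only [mem_Ico] at ha; omega
    · intro a ha; simp only [mem_Ico] at ha; omega
    · intro k hk
      simp only [mem_Ico] at hk
      have hnum : x^(n-k) * x^n = x⁻¹^k * (x^2)^n := by
        rw [inv_pow, ← pow_mul]
        have h2 : 2*n = k + ((n-k) + n) := by omega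
        rw [h2, pow_add, inv_mul_cancel_left₀ (pow_ne_zero k hx), pow_add]
      have hden : ((n:ℂ) - ((n-k:ℕ):ℂ)) = (k:ℂ) := by
        rw [Nat.cast_sub hk.2.le]; ring
      rw [hden, hnum]
  rw [hre]
  ring

lemma stepB (x : ℂ) (q N : ℕ) :
    ∑ n ∈ Icc 1 N, ∑ m ∈ Ico 1 n, x^m * x^n / (((n:ℂ)-(m:ℂ)) * (n:ℂ)^q)
      = (∑ n ∈ Icc 1 N, ∑ m ∈ Ico 1 n, x^m * x^n / ((m:ℂ)^q * ((n:ℂ)-(m:ℂ))))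
        - ∑ i ∈ range q, ∑ n ∈ Icc 1 N, ∑ m ∈ Ico 1 n,
            x^m * x^n / ((m:ℂ)^(q-i) * (n:ℂ)^(i+1)) := by
  have key : ∀ n ∈ Icc 1 N, ∀ m ∈ Ico 1 n,
      x^m * x^n / (((n:ℂ)-(m:ℂ)) * (n:ℂ)^q)
        = x^m * x^n / ((m:ℂ)^q * ((n:ℂ)-(m:ℂ)))
          - ∑ i ∈ range q, x^m * x^n / ((m:ℂ)^(q-i) * (n:ℂ)^(i+1)) := by
    intro n hn m hm
    rw [mem_Icc] at hn; rw [mem_Ico] at hm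
    have hmne : (m:ℂ) ≠ 0 := Nat.cast_ne_zero.mpr (by omega)
    have hnne : (n:ℂ) ≠ 0 := Nat.cast_ne_zero.mpr (by omega)
    have hsub : (n:ℂ) - (m:ℂ) ≠ 0 := by
      rw [sub_ne_zero]
      exact Nat.cast_injective.ne (show n ≠ m by omega)
    rw [div_eq_mul_one_div, pf_lemma q (m:ℂ) (n:ℂ) hmne hnne hsub, mul_sub, Finset.mul_sum]
    congr 1
    · rw [mul_one_div]
    · exact Finset.sum_congr rfl fun i _ => by rw [mul_one_div]
  calc ∑ n ∈ Icc 1 N, ∑ m ∈ Ico 1 n, x^m * x^n / (((n:ℂ)-(m:ℂ)) * (n:ℂ)^q)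
      = ∑ n ∈ Icc 1 N, ∑ m ∈ Ico 1 n,
          (x^m * x^n / ((m:ℂ)^q * ((n:ℂ)-(m:ℂ)))
            - ∑ i ∈ range q, x^m * x^n / ((m:ℂ)^(q-i) * (n:ℂ)^(i+1))) := by
        refine Finset.sum_congr rfl fun n hn => Finset.sum_congr rfl fun m hm => key n hn m hm
    _ = (∑ n ∈ Icc 1 N, ∑ m ∈ Ico 1 n, x^m * x^n / ((m:ℂ)^q * ((n:ℂ)-(m:ℂ))))
        - ∑ n ∈ Icc 1 N, ∑ m ∈ Ico 1 n, ∑ i ∈ range q,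
            x^m * x^n / ((m:ℂ)^(q-i) * (n:ℂ)^(i+1)) := by
        rw [← Finset.sum_sub_distrib]
        exact Finset.sum_congr rfl fun n _ => by rw [← Finset.sum_sub_distrib]
    _ = _ := by
        congr 1
        have hswap : ∀ n : ℕ,
            (∑ m ∈ Ico 1 n, ∑ i ∈ range q, x^m * x^n / ((m:ℂ)^(q-i) * (n:ℂ)^(i+1)))
            = ∑ i ∈ range q, ∑ m ∈ Ico 1 n, x^m * x^n / ((m:ℂ)^(q-i) * (n:ℂ)^(i+1)) :=
          fun n => Finset.sum_comm
        rw [Finset.sum_congr rfl fun n _ => hswap n]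
        exact Finset.sum_comm

lemma stepC (x : ℂ) (q N : ℕ) :
    ∑ n ∈ Icc 1 N, ∑ m ∈ Ico 1 n, x^m * x^n / ((m:ℂ)^q * ((n:ℂ)-(m:ℂ)))
      = ∑ m ∈ Icc 1 N, ((x^2)^m/(m:ℂ)^q) * ∑ j ∈ Icc 1 (N-m), x^j/(j:ℂ) := by
  rw [Finset.sum_comm' (t' := Icc 1 N) (s' := fun m => Ioc m N)
    (by intro n m; simp only [mem_Icc, mem_Ico, mem_Ioc]; omega)]
  refine Finset.sum_congr rfl fun m hm => ?_
  rw [mem_Icc] at hm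
  rw [Finset.mul_sum]
  refine Finset.sum_nbij' (fun n => n - m) (fun j => j + m) ?_ ?_ ?_ ?_ ?_
  · intro a ha; simp only [mem_Icc, mem_Ioc] at *; omega
  · intro a ha; simp only [mem_Icc, mem_Ioc] at *; omega
  · intro a ha; simp only [mem_Ioc] at ha; omega
  · intro a ha; simp only [mem_Icc] at ha; omega
  · intro n hn
    simp only [mem_Ioc] at hn
    have hnum : x^m * x^n = (x^2)^m * x^(n-m) := by
      rw [← pow_mul, ← pow_add, ← pow_add]
      congr 1
      omega
    have hden : ((n-m:ℕ):ℂ) = (n:ℂ) - (m:ℂ) := by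
      rw [Nat.cast_sub hn.1.le]
    rw [hnum, hden, div_mul_div_comm]

lemma stepD (x : ℂ) (N : ℕ) (a b : ℕ) :
    (∑ n ∈ Icc 1 N, ∑ m ∈ Ico 1 n, x^m * x^n/((m:ℂ)^a * (n:ℂ)^b))
    + (∑ n ∈ Icc 1 N, ∑ m ∈ Ico 1 n, x^m * x^n/((m:ℂ)^b * (n:ℂ)^a))
    = (∑ n ∈ Icc 1 N, x^n/(n:ℂ)^a) * (∑ n ∈ Icc 1 N, x^n/(n:ℂ)^b)
      - ∑ n ∈ Icc 1 N, (x^2)^n/(n:ℂ)^(a+b) := by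
  have hprod : (∑ n ∈ Icc 1 N, x^n/(n:ℂ)^a) * (∑ n ∈ Icc 1 N, x^n/(n:ℂ)^b)
      = ∑ m ∈ Icc 1 N, ∑ n ∈ Icc 1 N, x^m * x^n/((m:ℂ)^a * (n:ℂ)^b) := by
    rw [Finset.sum_mul_sum]
    exact Finset.sum_congr rfl fun m _ => Finset.sum_congr rfl fun n _ => by
      rw [div_mul_div_comm]
  have hsplit : ∀ m ∈ Icc 1 N, ∑ n ∈ Icc 1 N, x^m * x^n/((m:ℂ)^a * (n:ℂ)^b)
      = (∑ n ∈ Ico 1 m, x^m * x^n/((m:ℂ)^a * (n:ℂ)^b))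
        + x^m * x^m/((m:ℂ)^a * (m:ℂ)^b)
        + ∑ n ∈ Ioc m N, x^m * x^n/((m:ℂ)^a * (n:ℂ)^b) := by
    intro m hm
    rw [mem_Icc] at hm
    have e1 : ∀ mm : ℕ, Icc 1 mm = Ioc 0 mm := by
      intro mm; ext c; simp only [mem_Icc, mem_Ioc]; omega
    rw [e1 N, ← Finset.sum_Ioc_consecutive _ (Nat.zero_le m) hm.2, ← e1 m,
      ← Finset.Ico_add_one_right_eq_Icc, Finset.sum_Ico_succ_top hm.1]
  rw [hprod, Finset.sum_congr rfl hsplit, Finset.sum_add_distrib, Finset.sum_add_distrib]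
  have hdiag : ∑ m ∈ Icc 1 N, x^m * x^m/((m:ℂ)^a * (m:ℂ)^b)
      = ∑ n ∈ Icc 1 N, (x^2)^n/(n:ℂ)^(a+b) := by
    refine Finset.sum_congr rfl fun m _ => ?_
    rw [← pow_add, ← pow_add, ← pow_mul]
    congr 2
    omega
  have hlower : ∑ m ∈ Icc 1 N, ∑ n ∈ Ico 1 m, x^m * x^n/((m:ℂ)^a * (n:ℂ)^b)
      = ∑ n ∈ Icc 1 N, ∑ m ∈ Ico 1 n, x^m * x^n/((m:ℂ)^b * (n:ℂ)^a) := by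
    refine Finset.sum_congr rfl fun n _ => Finset.sum_congr rfl fun m _ => by ring
  have hupper : ∑ m ∈ Icc 1 N, ∑ n ∈ Ioc m N, x^m * x^n/((m:ℂ)^a * (n:ℂ)^b)
      = ∑ n ∈ Icc 1 N, ∑ m ∈ Ico 1 n, x^m * x^n/((m:ℂ)^a * (n:ℂ)^b) := by
    rw [Finset.sum_comm' (t' := Icc 1 N) (s' := fun n => Ico 1 n)
      (by intro m n; simp only [mem_Icc, mem_Ioc, mem_Ico]; omega)]
  rw [hdiag, hlower, hupper]
  ring

lemma stepE (x : ℂ) (q N : ℕ) :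
    ∑ i ∈ range q, (∑ n ∈ Icc 1 N, ∑ m ∈ Ico 1 n, x^m*x^n/((m:ℂ)^(q-i)*(n:ℂ)^(i+1)))
    = (1/2) * ∑ i ∈ range q,
        (∑ n ∈ Icc 1 N, x^n/(n:ℂ)^(q-i)) * (∑ n ∈ Icc 1 N, x^n/(n:ℂ)^(i+1))
      - ((q:ℂ)/2) * ∑ n ∈ Icc 1 N, (x^2)^n/(n:ℂ)^(q+1) := by
  have hrefl : ∑ i ∈ range q, (∑ n ∈ Icc 1 N, ∑ m ∈ Ico 1 n, x^m*x^n/((m:ℂ)^(q-i)*(n:ℂ)^(i+1)))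
      = ∑ i ∈ range q, (∑ n ∈ Icc 1 N, ∑ m ∈ Ico 1 n, x^m*x^n/((m:ℂ)^(i+1)*(n:ℂ)^(q-i))) := by
    rw [← Finset.sum_range_reflect
      (fun i => ∑ n ∈ Icc 1 N, ∑ m ∈ Ico 1 n, x^m*x^n/((m:ℂ)^(i+1)*(n:ℂ)^(q-i))) q]
    refine Finset.sum_congr rfl fun j hj => ?_
    rw [mem_range] at hj
    have e1 : q-1-j+1 = q-j := by omega
    have e2 : q - (q-1-j) = j+1 := by omega
    rw [e1, e2]
  have h2 : (2:ℂ) * ∑ i ∈ range q,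
      (∑ n ∈ Icc 1 N, ∑ m ∈ Ico 1 n, x^m*x^n/((m:ℂ)^(q-i)*(n:ℂ)^(i+1)))
      = ∑ i ∈ range q, ((∑ n ∈ Icc 1 N, x^n/(n:ℂ)^(q-i)) * (∑ n ∈ Icc 1 N, x^n/(n:ℂ)^(i+1))
          - ∑ n ∈ Icc 1 N, (x^2)^n/(n:ℂ)^(q+1)) := by
    rw [two_mul]
    nth_rewrite 2 [hrefl]
    rw [← Finset.sum_add_distrib]
    refine Finset.sum_congr rfl fun i hi => ?_
    rw [mem_range] at hi
    have := stepD x N (q-i) (i+1)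
    rw [show q-i+(i+1) = q+1 by omega] at this
    exact this
  rw [Finset.sum_sub_distrib, Finset.sum_const, Finset.card_range, nsmul_eq_mul] at h2
  linear_combination h2 / 2

lemma aux_frac (C mR D S : ℝ) (hm : 0 < mR) (hD : 0 < D) (hS : 0 < S) (hrel : mR + D = S) :
    (1/mR) * (C/D) = (C/S)*(1/mR + 1/D) := by
  have hm' : mR ≠ 0 := ne_of_gt hm
  have hD' : D ≠ 0 := ne_of_gt hD
  have hS' : S ≠ 0 := ne_of_gt hS
  field_simp
  rw [← hrel]; ring

lemma err_bound (x : ℂ) (hx1 : ‖x‖ ≤ 1) (q : ℕ) (hq : 1 ≤ q) (C : ℝ) (hC : 0 ≤ C)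
    (R : ℕ → ℂ) (hR : ∀ K, ‖R K‖ ≤ C / (K+1)) (N : ℕ) :
    ‖∑ m ∈ Icc 1 N, ((x^2)^m/(m:ℂ)^q) * R (N-m)‖
      ≤ C * (2*(1 + Real.log N)/((N:ℝ)+1)) := by
  have hNpos : (0:ℝ) < (N:ℝ)+1 := by positivity
  calc ‖∑ m ∈ Icc 1 N, ((x^2)^m/(m:ℂ)^q) * R (N-m)‖
      ≤ ∑ m ∈ Icc 1 N, ‖((x^2)^m/(m:ℂ)^q) * R (N-m)‖ := norm_sum_le _ _
    _ ≤ ∑ m ∈ Icc 1 N, (C/((N:ℝ)+1)) * (1/(m:ℝ) + 1/(((N-m:ℕ):ℝ)+1)) := by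
        refine Finset.sum_le_sum fun m hm => ?_
        rw [mem_Icc] at hm
        have hm0 : (0:ℝ) < (m:ℝ) := by exact_mod_cast hm.1
        have hm1 : (1:ℝ) ≤ (m:ℝ) := by exact_mod_cast hm.1
        have hD : (0:ℝ) < ((N-m:ℕ):ℝ)+1 := by positivity
        have h1 : ‖((x^2)^m/(m:ℂ)^q)‖ ≤ 1/(m:ℝ) := by
          have hnum : ‖(x^2)^m‖ ≤ 1 := by
            rw [norm_pow]
            exact pow_le_one₀ (norm_nonneg _)
              (by rw [norm_pow]; exact pow_le_one₀ (norm_nonneg _) hx1)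
          have hden : ‖(m:ℂ)^q‖ = (m:ℝ)^q := by rw [norm_pow, Complex.norm_natCast]
          rw [norm_div, hden]
          apply div_le_div₀ (by norm_num) hnum hm0
          calc (m:ℝ) = (m:ℝ)^1 := (pow_one _).symm
            _ ≤ (m:ℝ)^q := pow_le_pow_right₀ hm1 hq
        have h2 : ‖R (N-m)‖ ≤ C/(((N-m:ℕ):ℝ)+1) := hR (N-m)
        calc ‖((x^2)^m/(m:ℂ)^q) * R (N-m)‖ = ‖((x^2)^m/(m:ℂ)^q)‖ * ‖R (N-m)‖ := norm_mul _ _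
          _ ≤ (1/(m:ℝ)) * (C/(((N-m:ℕ):ℝ)+1)) :=
              mul_le_mul h1 h2 (norm_nonneg _) (by positivity)
          _ = (C/((N:ℝ)+1)) * (1/(m:ℝ) + 1/(((N-m:ℕ):ℝ)+1)) := by
              apply aux_frac _ _ _ _ hm0 hD hNpos
              push_cast [Nat.cast_sub hm.2]
              ring
    _ ≤ C * (2*(1 + Real.log N)/((N:ℝ)+1)) := by
        rw [← Finset.mul_sum, Finset.sum_add_distrib]
        have hh1 : ∑ m ∈ Icc 1 N, 1/(m:ℝ) = (harmonic N : ℝ) := by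
          rw [harmonic_eq_sum_Icc]
          push_cast
          exact Finset.sum_congr rfl fun m _ => (one_div _)
        have hh2 : ∑ m ∈ Icc 1 N, 1/(((N-m:ℕ):ℝ)+1) = (harmonic N : ℝ) := by
          rw [← hh1]
          refine Finset.sum_nbij' (fun m => N-m+1) (fun j => N-j+1) ?_ ?_ ?_ ?_ ?_
          · intro a ha; simp only [mem_Icc] at *; omega
          · intro a ha; simp only [mem_Icc] at *; omega
          · intro a ha; simp only [mem_Icc] at ha; omega
          · intro a ha; simp only [mem_Icc] at ha; omega
          · intro m hm
            simp only [mem_Icc] at hm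
            congr 1
            push_cast
            ring
        rw [hh1, hh2]
        have hbd := harmonic_le_one_add_log N
        have hC' : (0:ℝ) ≤ C/((N:ℝ)+1) := by positivity
        calc (C/((N:ℝ)+1)) * ((harmonic N:ℝ) + (harmonic N:ℝ))
            ≤ (C/((N:ℝ)+1)) * ((1 + Real.log N) + (1 + Real.log N)) := by
              apply mul_le_mul_of_nonneg_left _ hC'
              gcongr
          _ = C * (2*(1 + Real.log N)/((N:ℝ)+1)) := by ring

lemma err_tendsto (C : ℝ) :
    Tendsto (fun N : ℕ => C * (2*(1 + Real.log N)/((N:ℝ)+1))) atTop (𝓝 0) := by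
  have h1 : Tendsto (fun N : ℕ => (1:ℝ)/((N:ℝ)+1)) atTop (𝓝 0) := by
    have := (tendsto_const_div_atTop_nhds_zero_nat (1:ℝ)).comp (tendsto_add_atTop_nat 1)
    refine this.congr fun N => ?_
    simp only [Function.comp_apply]
    push_cast
    ring
  have h2 : Tendsto (fun N : ℕ => Real.log N/((N:ℝ)+1)) atTop (𝓝 0) := by
    have hr := Real.tendsto_pow_log_div_mul_add_atTop 1 1 1 one_ne_zero
    have := hr.comp (tendsto_natCast_atTop_atTop (R := ℝ))
    refine this.congr fun N => ?_
    simp only [Function.comp_apply, pow_one, one_mul]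
  have h3 : Tendsto (fun N : ℕ => (1:ℝ)/((N:ℝ)+1) + Real.log N/((N:ℝ)+1)) atTop (𝓝 0) := by
    have := h1.add h2
    rwa [add_zero] at this
  have h4 := h3.const_mul (2*C)
  rw [mul_zero] at h4
  refine h4.congr fun N => ?_
  ring

theorem stmt9 (q : ℕ) (hq : 0 < q) (x : ℂ)
    (h : 0 < ‖x‖) (h' : ‖x‖ ≤ 1) (h'' : x ≠ 1)
    (hconv : 2 ≤ q ∨ x ^ 2 ≠ 1) :
    S1 1 q x⁻¹ (x ^ 2)
      = ((q : ℂ) / 2) * Li (q + 1) (x ^ 2) + Li (q + 1) x + Li 1 x * Li q (x ^ 2)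
        - (1 / 2 : ℂ) * ∑ k ∈ range q, Li (k + 1) x * Li ((q - 1 - k) + 1) x := by
  have hxn : ‖x‖ ≤ 1 := h'
  have hx0 : x ≠ 0 := by
    intro h0
    rw [h0] at h
    simp at h
  have hx2n : ‖x^2‖ ≤ 1 := by rw [norm_pow]; exact pow_le_one₀ (norm_nonneg _) hxn
  set C : ℝ := 6 / ‖1 - x‖ with hCdef
  have h1x : (0:ℝ) < ‖(1:ℂ) - x‖ := norm_pos_iff.mpr (sub_ne_zero.mpr (Ne.symm h''))
  have hCpos : 0 ≤ C := by positivity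
  have hR : ∀ K : ℕ, ‖Li 1 x - ∑ j ∈ Icc 1 K, x^j/(j:ℂ)‖ ≤ C/(K+1) := by
    intro K
    have hlt := Li_tail x hxn h'' K
    have he : ∑ j ∈ Icc 1 K, x^j/(j:ℂ)^1 = ∑ j ∈ Icc 1 K, x^j/(j:ℂ) := by
      simp [pow_one]
    rw [he] at hlt
    exact hlt
  have hT1 : Tendsto (fun N : ℕ => ∑ n ∈ Icc 1 N, x^n/(n:ℂ)^(q+1)) atTop (𝓝 (Li (q+1) x)) :=
    tendsto_Lp (q+1) (by omega) x hxn (Or.inl h'')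
  have hT2 : Tendsto (fun N : ℕ => ∑ n ∈ Icc 1 N, (x^2)^n/(n:ℂ)^q) atTop
      (𝓝 (Li q (x^2))) := by
    apply tendsto_Lp q hq (x^2) hx2n
    rcases hconv with hh | hh
    · exact Or.inr hh
    · exact Or.inl hh
  have hT3 : Tendsto (fun N : ℕ => ∑ n ∈ Icc 1 N, (x^2)^n/(n:ℂ)^(q+1)) atTop
      (𝓝 (Li (q+1) (x^2))) :=
    tendsto_Lp (q+1) (by omega) (x^2) hx2n (Or.inr (by omega))
  have hTp : ∀ p, 1 ≤ p →
      Tendsto (fun N : ℕ => ∑ n ∈ Icc 1 N, x^n/(n:ℂ)^p) atTop (𝓝 (Li p x)) :=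
    fun p hp => tendsto_Lp p hp x hxn (Or.inl h'')
  have hE : Tendsto (fun N : ℕ => ∑ m ∈ Icc 1 N,
      ((x^2)^m/(m:ℂ)^q) * (Li 1 x - ∑ j ∈ Icc 1 (N-m), x^j/(j:ℂ))) atTop (𝓝 0) :=
    squeeze_zero_norm
      (fun N => err_bound x hxn q hq C hCpos
        (fun K => Li 1 x - ∑ j ∈ Icc 1 K, x^j/(j:ℂ)) hR N)
      (err_tendsto C)
  have hTsum : Tendsto (fun N : ℕ => ∑ i ∈ range q,
      (∑ n ∈ Icc 1 N, x^n/(n:ℂ)^(q-i)) * (∑ n ∈ Icc 1 N, x^n/(n:ℂ)^(i+1))) atTop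
      (𝓝 (∑ i ∈ range q, Li (q-i) x * Li (i+1) x)) := by
    apply tendsto_finset_sum
    intro i hi
    rw [mem_range] at hi
    exact (hTp (q-i) (by omega)).mul (hTp (i+1) (by omega))
  have master : ∀ N : ℕ, ∑ n ∈ Icc 1 N, zf n 1 x⁻¹ * (x^2)^n / (n:ℂ)^q
      = (∑ n ∈ Icc 1 N, x^n/(n:ℂ)^(q+1))
        + ((∑ m ∈ Icc 1 N, (x^2)^m/(m:ℂ)^q) * Li 1 x
           - ∑ m ∈ Icc 1 N, ((x^2)^m/(m:ℂ)^q) * (Li 1 x - ∑ j ∈ Icc 1 (N-m), x^j/(j:ℂ)))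
        - ((1/2) * ∑ i ∈ range q,
              (∑ n ∈ Icc 1 N, x^n/(n:ℂ)^(q-i)) * (∑ n ∈ Icc 1 N, x^n/(n:ℂ)^(i+1))
           - ((q:ℂ)/2) * ∑ n ∈ Icc 1 N, (x^2)^n/(n:ℂ)^(q+1)) := by
    intro N
    have h0 : ∑ n ∈ Icc 1 N, zf n 1 x⁻¹ * (x^2)^n / (n:ℂ)^q
        = ∑ n ∈ Icc 1 N, (∑ k ∈ Icc 1 n, x⁻¹^k/(k:ℂ)^1) * (x^2)^n / (n:ℂ)^q := rfl
    rw [h0, stepA x hx0 q N, stepB x q N, stepC x q N, stepE x q N]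
    have hU : ∑ m ∈ Icc 1 N, ((x^2)^m/(m:ℂ)^q) * ∑ j ∈ Icc 1 (N-m), x^j/(j:ℂ)
        = (∑ m ∈ Icc 1 N, (x^2)^m/(m:ℂ)^q) * Li 1 x
          - ∑ m ∈ Icc 1 N, ((x^2)^m/(m:ℂ)^q) * (Li 1 x - ∑ j ∈ Icc 1 (N-m), x^j/(j:ℂ)) := by
      rw [Finset.sum_mul, ← Finset.sum_sub_distrib]
      exact Finset.sum_congr rfl fun m _ => by ring
    rw [hU]
    ring
  have hlim : Tendsto (fun N : ℕ => ∑ n ∈ Icc 1 N, zf n 1 x⁻¹ * (x^2)^n / (n:ℂ)^q) atTop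
      (𝓝 (Li (q+1) x + (Li q (x^2) * Li 1 x - 0)
        - ((1/2) * ∑ i ∈ range q, Li (q-i) x * Li (i+1) x
            - ((q:ℂ)/2) * Li (q+1) (x^2)))) := by
    have hcomb := ((hT1.add ((hT2.mul_const (Li 1 x)).sub hE)).sub
      ((hTsum.const_mul (1/2:ℂ)).sub (hT3.const_mul ((q:ℂ)/2))))
    exact hcomb.congr fun N => (master N).symm
  have hS1 : S1 1 q x⁻¹ (x^2)
      = limUnder atTop (fun N : ℕ => ∑ n ∈ Icc 1 N, zf n 1 x⁻¹ * (x^2)^n / (n:ℂ)^q) := rfl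
  rw [hS1, hlim.limUnder_eq]
  have hsum_eq : ∑ i ∈ range q, Li (q-i) x * Li (i+1) x
      = ∑ k ∈ range q, Li (k+1) x * Li ((q-1-k)+1) x := by
    refine Finset.sum_congr rfl fun k hk => ?_
    rw [mem_range] at hk
    rw [show q-1-k+1 = q-k by omega]
    ring
  rw [hsum_eq]
  ring
end
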